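/- arXiv:2110.08040 — 4 statements merged into one kernel-verified Lean document; each statement's English description precedes it below -/
import Mathlib

section
/- Assume conditions (M), (O), (R), (P). Let U ∈ Cm/∼ be a PIP equivalence class and let η, ν₁, ν₂ ∈ U with η ≠ ν₁, ν₁ ≠ ν₂ and ν₂ ≠ η. Then ν₁ • ν₂ = η if and only if ν₁ ⊓ ν₂ ≤ η. (This is Lemma 14 of the paper, relating the Boolean group operation on a PIP class to the meet operation of the congruence lattice.) -/
variable {A : Type*}

/-- `η` is a completely meet irreducible member of `C`, with (unique) cover `p` in `C`. -/
def IsCMI (C : Set (Setoid A)) (η p : Setoid A) : Prop :=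
  η ∈ C ∧ p ∈ C ∧ η < p ∧ ∀ β ∈ C, η < β → p ≤ β

/-- A single up or down transposition between the intervals `I[pq.1, pq.2]`
and `I[rs.1, rs.2]` of `C`. -/
def Persp (C : Set (Setoid A)) (pq rs : Setoid A × Setoid A) : Prop :=
  pq.1 ∈ C ∧ pq.2 ∈ C ∧ rs.1 ∈ C ∧ rs.2 ∈ C ∧
    ((pq.1 = pq.2 ⊓ rs.1 ∧ rs.2 = pq.2 ⊔ rs.1) ∨
      (rs.1 = rs.2 ⊓ pq.1 ∧ pq.2 = rs.2 ⊔ pq.1))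

/-- Projectivity of intervals of `C`: a finite chain of up and down transpositions. -/
def Projective (C : Set (Setoid A)) : Setoid A × Setoid A → Setoid A × Setoid A → Prop :=
  Relation.ReflTransGen (Persp C)

/-- Prime interval projectivity `φ ∼ ψ`: the prime intervals `I[φ,φ⁺]` and `I[ψ,ψ⁺]`
over completely meet irreducible members of `C` are projective. -/
def PIP (C : Set (Setoid A)) (φ ψ : Setoid A) : Prop :=
  ∃ p q, IsCMI C φ p ∧ IsCMI C ψ q ∧ Projective C (φ, p) (ψ, q)

/-- `Θ(a,b)`: the least member of `C` containing the pair `(a, b)`. -/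
def theta (C : Set (Setoid A)) (a b : A) : Setoid A :=
  sInf {s | s ∈ C ∧ s.r a b}

/-- The relation `φ • ψ`: the pairs of `p = φ⁺ = ψ⁺` on which `φ` and `ψ` agree
(the complement of the symmetric difference of `φ` and `ψ` intersected with `p`). -/
def Bul (p φ ψ : Setoid A) (x y : A) : Prop :=
  p.r x y ∧ (φ.r x y ↔ ψ.r x y)

section Aux

variable {C : Set (Setoid A)} {one : A}

private lemma theta_rel (C : Set (Setoid A)) (a b : A) : (theta C a b).r a b :=
  fun _ hr => hr.2

private lemma theta_le {s : Setoid A} (hs : s ∈ C) {a b : A} (h : s.r a b) :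
    theta C a b ≤ s := sInf_le ⟨hs, h⟩

private lemma mem_sup2 (hSup : ∀ S ⊆ C, sSup S ∈ C) {x y : Setoid A}
    (hx : x ∈ C) (hy : y ∈ C) : x ⊔ y ∈ C := by
  rw [← sSup_pair]
  refine hSup _ ?_
  intro s hs
  rcases hs with rfl | hs
  · exact hx
  · rw [Set.mem_singleton_iff] at hs; subst hs; exact hy

private lemma mem_inf2 (hInf : ∀ S ⊆ C, sInf S ∈ C) {x y : Setoid A}
    (hx : x ∈ C) (hy : y ∈ C) : x ⊓ y ∈ C := by
  rw [← sInf_pair]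
  refine hInf _ ?_
  intro s hs
  rcases hs with rfl | hs
  · exact hx
  · rw [Set.mem_singleton_iff] at hs; subst hs; exact hy

private lemma theta_mem (hInf : ∀ S ⊆ C, sInf S ∈ C) (a b : A) : theta C a b ∈ C :=
  hInf _ (fun _ hs => hs.1)

/-- In `C`, the interval `[ν, q]` is prime when `ν` is CMI with cover `q`. -/
private lemma prime_int {ν q z : Setoid A} (hcmi : IsCMI C ν q) (hz : z ∈ C)
    (h1 : ν ≤ z) (h2 : z ≤ q) : z = ν ∨ z = q := by
  rcases eq_or_lt_of_le h1 with h | h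
  · exact Or.inl h.symm
  · exact Or.inr (le_antisymm h2 (hcmi.2.2.2 z hz h))

/-- uniqueness of covers of CMI elements -/
private lemma cover_eq {η p q : Setoid A} (h1 : IsCMI C η p) (h2 : IsCMI C η q) : p = q :=
  le_antisymm (h1.2.2.2 q h2.2.1 h2.2.2.1) (h2.2.2.2 p h1.2.1 h1.2.2.1)

private lemma cmi_of_pip
    (hP : ∀ φ ψ p q : Setoid A, IsCMI C φ p → IsCMI C ψ q →
      Projective C (φ, p) (ψ, q) → p = q)
    {η p ν : Setoid A} (hη : IsCMI C η p) (h : PIP C ν η) : IsCMI C ν p := by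
  obtain ⟨q, q', hν, hη', hproj⟩ := h
  have e1 : q = q' := hP ν η q q' hν hη' hproj
  have e2 : q' = p := cover_eq hη' hη
  rw [← e2, ← e1]
  exact hν

/-- Zorn: a member of `C` avoiding a pair extends to a maximal one avoiding it. -/
private lemma zorn_avoid (hSup : ∀ S ⊆ C, sSup S ∈ C)
    (hDir : ∀ D ⊆ C, D.Nonempty → DirectedOn (· ≤ ·) D →
      ∀ x y : A, (sSup D).r x y ↔ ∃ s ∈ D, s.r x y)
    {γ : Setoid A} (hγ : γ ∈ C) {a b : A} (hab : ¬ γ.r a b) :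
    ∃ Ψ, Ψ ∈ C ∧ γ ≤ Ψ ∧ ¬ Ψ.r a b ∧ ∀ z ∈ C, ¬ z.r a b → Ψ ≤ z → z = Ψ := by
  have main := zorn_le_nonempty₀ {δ : Setoid A | δ ∈ C ∧ ¬ δ.r a b} ?_ γ ⟨hγ, hab⟩
  · obtain ⟨m, hγm, hmax⟩ := main
    exact ⟨m, hmax.1.1, hγm, hmax.1.2,
      fun z hz hzab hle => le_antisymm (hmax.2 ⟨hz, hzab⟩ hle) hle⟩
  · intro c hcS hchain y hy
    refine ⟨sSup c, ⟨hSup c (fun s hs => (hcS hs).1), ?_⟩, fun z hz => le_sSup hz⟩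
    intro h
    rw [hDir c (fun s hs => (hcS hs).1) ⟨y, hy⟩ hchain.directedOn a b] at h
    obtain ⟨s, hs, hsab⟩ := h
    exact (hcS hs).2 hsab

/-- A maximal member of `C` avoiding `(a,b)` is CMI with cover `Ψ ⊔ Θ(a,b)`. -/
private lemma cmi_of_max (hInf : ∀ S ⊆ C, sInf S ∈ C) (hSup : ∀ S ⊆ C, sSup S ∈ C)
    {Ψ : Setoid A} {a b : A} (hΨ : Ψ ∈ C) (hab : ¬ Ψ.r a b)
    (hmax : ∀ z ∈ C, ¬ z.r a b → Ψ ≤ z → z = Ψ) :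
    IsCMI C Ψ (Ψ ⊔ theta C a b) := by
  refine ⟨hΨ, mem_sup2 hSup hΨ (theta_mem hInf a b), lt_of_le_of_ne le_sup_left ?_, ?_⟩
  · intro h
    exact hab ((le_sup_right.trans h.ge) (theta_rel C a b))
  · intro β hβ hlt
    by_cases hb : β.r a b
    · exact sup_le hlt.le (theta_le hβ hb)
    · exact absurd (hmax β hβ hb hlt.le) hlt.ne'

/-- The key lemma (uses Zorn, modularity and (P)):
if `ν` is CMI with cover `p`, `(a,b) ∈ p ∖ ν`, and `p ≰ ν ⊔ Θ(1,a)`, then `ν 1 a`. -/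
private lemma side (hInf : ∀ S ⊆ C, sInf S ∈ C) (hSup : ∀ S ⊆ C, sSup S ∈ C)
    (hDir : ∀ D ⊆ C, D.Nonempty → DirectedOn (· ≤ ·) D →
      ∀ x y : A, (sSup D).r x y ↔ ∃ s ∈ D, s.r x y)
    (hM : ∀ x ∈ C, ∀ y ∈ C, ∀ z ∈ C, x ≤ z → x ⊔ y ⊓ z = (x ⊔ y) ⊓ z)
    (hP : ∀ φ ψ p q : Setoid A, IsCMI C φ p → IsCMI C ψ q →
      Projective C (φ, p) (ψ, q) → p = q)
    {ν p : Setoid A} (hν : IsCMI C ν p) {a b : A}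
    (hpab : p.r a b) (hnab : ¬ ν.r a b)
    (hGa : ¬ p ≤ ν ⊔ theta C one a) : ν.r one a := by
  have hνC := hν.1
  have hpC := hν.2.1
  have hνp : ν < p := hν.2.2.1
  set X := theta C one a with hXdef
  set θ := theta C a b with hθdef
  have hXC : X ∈ C := theta_mem hInf one a
  have hθC : θ ∈ C := theta_mem hInf a b
  set Ga := ν ⊔ X with hGadef
  set P := p ⊔ X with hPdef
  have hGaC : Ga ∈ C := mem_sup2 hSup hνC hXC
  have hPC : P ∈ C := mem_sup2 hSup hpC hXC
  have hθp : θ ≤ p := theta_le hpC hpab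
  have hθν : ¬ θ ≤ ν := fun h => hnab (h (theta_rel C a b))
  have hνθ : ν ⊔ θ = p := by
    refine le_antisymm (sup_le hνp.le hθp) (hν.2.2.2 _ (mem_sup2 hSup hνC hθC) ?_)
    exact lt_of_le_of_ne le_sup_left (fun h => hθν (le_sup_right.trans h.ge))
  have hGaP_le : Ga ≤ P := sup_le (hνp.le.trans le_sup_left) le_sup_right
  have hGap_sup : Ga ⊔ p = P := by
    refine le_antisymm (sup_le hGaP_le le_sup_left) (sup_le le_sup_right ?_)
    exact le_sup_right.trans le_sup_left
  have hGap : Ga ⊓ p = ν := by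
    rcases prime_int hν (mem_inf2 hInf hGaC hpC) (le_inf le_sup_left hνp.le)
      inf_le_right with h | h
    · exact h
    · exact absurd (h ▸ inf_le_left) hGa
  have hGaab : ¬ Ga.r a b := by
    intro h
    exact hGa (hνθ ▸ sup_le le_sup_left (theta_le hGaC h))
  obtain ⟨Ψ, hΨC, hGaΨ, hΨab, hΨmax⟩ := zorn_avoid hSup hDir hGaC hGaab
  have hcmiΨ : IsCMI C Ψ (Ψ ⊔ θ) := cmi_of_max hInf hSup hΨC hΨab hΨmax
  have hXΨ : X ≤ Ψ := le_sup_right.trans hGaΨ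
  have hνΨ : ν ≤ Ψ := le_sup_left.trans hGaΨ
  have hsup : P ⊔ Ψ = Ψ ⊔ θ := by
    refine le_antisymm (sup_le (sup_le ?_ (hXΨ.trans le_sup_left)) le_sup_left)
      (sup_le le_sup_right (hθp.trans (le_sup_left.trans le_sup_left)))
    rw [← hνθ]
    exact sup_le (hνΨ.trans le_sup_left) le_sup_right
  have hinf : P ⊓ Ψ = Ga := by
    refine le_antisymm ?_ (le_inf hGaP_le hGaΨ)
    have hzC : P ⊓ Ψ ∈ C := mem_inf2 hInf hPC hΨC
    have hzp : (P ⊓ Ψ) ⊓ p = ν := by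
      rcases prime_int hν (mem_inf2 hInf hzC hpC)
        (le_inf (le_inf (hνp.le.trans le_sup_left) hνΨ) hνp.le) inf_le_right with h | h
      · exact h
      · exact absurd (((h ▸ inf_le_left).trans inf_le_right) hpab) hΨab
    have hmod := hM Ga hGaC p hpC (P ⊓ Ψ) hzC (le_inf hGaP_le hGaΨ)
    rw [inf_comm p (P ⊓ Ψ), hzp, sup_eq_left.mpr le_sup_left, hGap_sup,
      inf_eq_right.mpr inf_le_left] at hmod
    exact hmod.ge
  have s1 : Persp C (ν, p) (Ga, P) := by
    refine ⟨hνC, hpC, hGaC, hPC, Or.inl ⟨?_, ?_⟩⟩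
    · rw [inf_comm]; exact hGap.symm
    · rw [sup_comm]; exact hGap_sup.symm
  have s2 : Persp C (Ga, P) (Ψ, Ψ ⊔ θ) :=
    ⟨hGaC, hPC, hΨC, mem_sup2 hSup hΨC hθC, Or.inl ⟨hinf.symm, hsup.symm⟩⟩
  have hproj : Projective C (ν, p) (Ψ, Ψ ⊔ θ) :=
    Relation.ReflTransGen.head s1 (Relation.ReflTransGen.single s2)
  have hPeq : p = Ψ ⊔ θ := hP ν Ψ p (Ψ ⊔ θ) hν hcmiΨ hproj
  have hΨlt : Ψ < p := by rw [hPeq]; exact hcmiΨ.2.2.1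
  have hΨν : Ψ = ν := by
    rcases eq_or_lt_of_le hνΨ with h | h
    · exact h.symm
    · exact absurd (hν.2.2.2 Ψ hΨC h) hΨlt.not_ge
  have hXν : X ≤ ν := hΨν ▸ hXΨ
  exact hXν (theta_rel C one a)

/-- Lemma ✦: if `ν` is CMI with cover `p` and `(a,b) ∈ p ∖ ν`, then `ν 1 a ∨ ν 1 b`. -/
private lemma star6 (hInf : ∀ S ⊆ C, sInf S ∈ C) (hSup : ∀ S ⊆ C, sSup S ∈ C)
    (hDir : ∀ D ⊆ C, D.Nonempty → DirectedOn (· ≤ ·) D →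
      ∀ x y : A, (sSup D).r x y ↔ ∃ s ∈ D, s.r x y)
    (hM : ∀ x ∈ C, ∀ y ∈ C, ∀ z ∈ C, x ≤ z → x ⊔ y ⊓ z = (x ⊔ y) ⊓ z)
    (hO : ∀ α ∈ C, ∀ a b : A, α ⊔ theta C one a = α ⊔ theta C one b ↔ α.r a b)
    (hP : ∀ φ ψ p q : Setoid A, IsCMI C φ p → IsCMI C ψ q →
      Projective C (φ, p) (ψ, q) → p = q)
    {ν p : Setoid A} (hν : IsCMI C ν p) {a b : A}
    (hpab : p.r a b) (hnab : ¬ ν.r a b) : ν.r one a ∨ ν.r one b := by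
  have hνC := hν.1
  have hpC := hν.2.1
  have hνp : ν < p := hν.2.2.1
  by_cases hone : p ≤ ν ⊔ theta C one a
  · by_cases htwo : p ≤ ν ⊔ theta C one b
    · exfalso
      have e1 : ν ⊔ theta C one a = p ⊔ theta C one a :=
        le_antisymm (sup_le (hνp.le.trans le_sup_left) le_sup_right)
          (sup_le hone le_sup_right)
      have e2 : ν ⊔ theta C one b = p ⊔ theta C one b :=
        le_antisymm (sup_le (hνp.le.trans le_sup_left) le_sup_right)
          (sup_le htwo le_sup_right)
      have e3 : p ⊔ theta C one a = p ⊔ theta C one b := (hO p hpC a b).mpr hpab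
      exact hnab ((hO ν hνC a b).mp (e1.trans (e3.trans e2.symm)))
    · exact Or.inr (side hInf hSup hDir hM hP hν (p.symm' hpab)
        (fun h => hnab (ν.symm' h)) htwo)
  · exact Or.inl (side hInf hSup hDir hM hP hν hpab hnab hone)

end Aux

/-- Lemma 14: for pairwise distinct `η, ν₁, ν₂` in one PIP class `U` (with common
cover `p`), `ν₁ • ν₂ = η` iff `ν₁ ⊓ ν₂ ≤ η`. -/
theorem stmt11 (one : A) (C : Set (Setoid A))
    (hInf : ∀ S ⊆ C, sInf S ∈ C) (hSup : ∀ S ⊆ C, sSup S ∈ C)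
    (hDir : ∀ D ⊆ C, D.Nonempty → DirectedOn (· ≤ ·) D →
      ∀ x y : A, (sSup D).r x y ↔ ∃ s ∈ D, s.r x y)
    (hM : ∀ x ∈ C, ∀ y ∈ C, ∀ z ∈ C, x ≤ z → x ⊔ y ⊓ z = (x ⊔ y) ⊓ z)
    (hO : ∀ α ∈ C, ∀ a b : A, α ⊔ theta C one a = α ⊔ theta C one b ↔ α.r a b)
    (hR : ∀ α ∈ C, ∀ β ∈ C, (∀ x : A, α.r one x ↔ β.r one x) → α = β)
    (hP : ∀ φ ψ p q : Setoid A, IsCMI C φ p → IsCMI C ψ q →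
      Projective C (φ, p) (ψ, q) → p = q)
    (η ν₁ ν₂ p : Setoid A) (hη : IsCMI C η p)
    (h1 : PIP C ν₁ η) (h2 : PIP C ν₂ η)
    (hne1 : η ≠ ν₁) (hne2 : ν₁ ≠ ν₂) (hne3 : ν₂ ≠ η) :
    η.r = Bul p ν₁ ν₂ ↔ ν₁ ⊓ ν₂ ≤ η := by
  have hν₁ : IsCMI C ν₁ p := cmi_of_pip hP hη h1
  have hν₂ : IsCMI C ν₂ p := cmi_of_pip hP hη h2
  have hηC := hη.1
  have hpC := hη.2.1
  have hν₁C := hν₁.1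
  have hν₂C := hν₂.1
  constructor
  · -- easy direction
    intro heq
    intro x y hxy
    have hxy' : ν₁.r x y ∧ ν₂.r x y := Setoid.inf_iff_and.mp hxy
    show η.r x y
    rw [heq]
    exact ⟨hν₁.2.2.1.le hxy'.1, iff_of_true hxy'.1 hxy'.2⟩
  · intro hsub
    have hmν₁ : ν₁ ⊓ ν₂ ≤ ν₁ := inf_le_left
    have hmν₂ : ν₁ ⊓ ν₂ ≤ ν₂ := inf_le_right
    -- the diamond: η ⊓ ν₁ = ν₁ ⊓ ν₂ = η ⊓ ν₂
    have hm1 : η ⊓ ν₁ = ν₁ ⊓ ν₂ := by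
      refine le_antisymm ?_ (le_inf hsub hmν₁)
      have hzC : η ⊓ ν₁ ∈ C := mem_inf2 hInf hηC hν₁C
      rcases prime_int hν₂ (mem_sup2 hSup hzC hν₂C) le_sup_right
        (sup_le (inf_le_right.trans hν₁.2.2.1.le) hν₂.2.2.1.le) with h | h
      · exact le_inf inf_le_right (le_sup_left.trans h.le)
      · exfalso
        have hmod := hM (η ⊓ ν₁) hzC ν₂ hν₂C ν₁ hν₁C inf_le_right
        have hle : ν₂ ⊓ ν₁ ≤ η ⊓ ν₁ := le_inf ((inf_comm ν₂ ν₁).le.trans hsub) inf_le_right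
        rw [sup_eq_left.mpr hle, h, inf_eq_right.mpr hν₁.2.2.1.le] at hmod
        have hν₁η : ν₁ ≤ η := hmod ▸ inf_le_left
        rcases eq_or_lt_of_le hν₁η with hh | hh
        · exact hne1 hh.symm
        · exact absurd (hν₁.2.2.2 η hηC hh) hη.2.2.1.not_ge
    have hm2 : η ⊓ ν₂ = ν₁ ⊓ ν₂ := by
      refine le_antisymm ?_ (le_inf hsub hmν₂)
      have hzC : η ⊓ ν₂ ∈ C := mem_inf2 hInf hηC hν₂C
      rcases prime_int hν₁ (mem_sup2 hSup hzC hν₁C) le_sup_right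
        (sup_le (inf_le_right.trans hν₂.2.2.1.le) hν₁.2.2.1.le) with h | h
      · exact le_inf (le_sup_left.trans h.le) inf_le_right
      · exfalso
        have hmod := hM (η ⊓ ν₂) hzC ν₁ hν₁C ν₂ hν₂C inf_le_right
        have hle : ν₁ ⊓ ν₂ ≤ η ⊓ ν₂ := le_inf hsub inf_le_right
        rw [sup_eq_left.mpr hle, h, inf_eq_right.mpr hν₂.2.2.1.le] at hmod
        have hν₂η : ν₂ ≤ η := hmod ▸ inf_le_left
        rcases eq_or_lt_of_le hν₂η with hh | hh
        · exact hne3 hh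
        · exact absurd (hν₂.2.2.2 η hηC hh) hη.2.2.1.not_ge
    -- a coatom joined with anything below p but not below it gives p
    have sup_p : ∀ α : Setoid A, IsCMI C α p → ∀ σ : Setoid A, σ ∈ C → σ ≤ p → ¬ σ ≤ α →
        α ⊔ σ = p := by
      intro α hα σ hσC hσp hσα
      refine le_antisymm (sup_le hα.2.2.1.le hσp) (hα.2.2.2 _ (mem_sup2 hSup hα.1 hσC) ?_)
      exact lt_of_le_of_ne le_sup_left (fun h => hσα (le_sup_right.trans h.ge))
    -- no element of the class of `one` avoids all three atoms
    have hQ : ∀ t : A, p.r one t → ¬ ν₁.r one t → ¬ ν₂.r one t → ¬ η.r one t → False := by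
      intro t hpt hn1 hn2 hnη
      have hmC : ν₁ ⊓ ν₂ ∈ C := mem_inf2 hInf hν₁C hν₂C
      have hmne : ν₁ ⊓ ν₂ ≠ ν₂ := by
        intro h
        have h' : ν₂ ≤ ν₁ := h ▸ inf_le_left
        rcases eq_or_lt_of_le h' with hh | hh
        · exact hne2 hh.symm
        · exact absurd (hν₂.2.2.2 ν₁ hν₁C hh) hν₁.2.2.1.not_ge
      obtain ⟨w, hw⟩ : ∃ w, ¬ ((ν₁ ⊓ ν₂).r one w ↔ ν₂.r one w) := by
        by_contra hc
        push_neg at hc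
        exact hmne (hR _ hmC _ hν₂C fun x => hc x)
      have hw2 : ν₂.r one w ∧ ¬ (ν₁ ⊓ ν₂).r one w := by
        by_cases hm : (ν₁ ⊓ ν₂).r one w
        · exact absurd (iff_of_true hm (hmν₂ hm)) hw
        · by_cases hv : ν₂.r one w
          · exact ⟨hv, hm⟩
          · exact absurd (iff_of_false hm hv) hw
      have hΘwC : theta C one w ∈ C := theta_mem hInf one w
      have hΘtC : theta C one t ∈ C := theta_mem hInf one t
      have hΘwv₂ : theta C one w ≤ ν₂ := theta_le hν₂C hw2.1
      have hΘwη : ¬ theta C one w ≤ η := by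
        intro h
        exact hw2.2 ((hm2 ▸ le_inf h hΘwv₂) (theta_rel C one w))
      have hΘwv₁ : ¬ theta C one w ≤ ν₁ :=
        fun h => hw2.2 ((le_inf h hΘwv₂) (theta_rel C one w))
      have hΘtp : theta C one t ≤ p := theta_le hpC hpt
      have hΘtη : ¬ theta C one t ≤ η := fun h => hnη (h (theta_rel C one t))
      have hΘtν₁ : ¬ theta C one t ≤ ν₁ := fun h => hn1 (h (theta_rel C one t))
      have e1 : η ⊔ theta C one t = p := sup_p η hη _ hΘtC hΘtp hΘtη
      have e2 : η ⊔ theta C one w = p :=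
        sup_p η hη _ hΘwC (hΘwv₂.trans hν₂.2.2.1.le) hΘwη
      have e3 : ν₁ ⊔ theta C one t = p := sup_p ν₁ hν₁ _ hΘtC hΘtp hΘtν₁
      have e4 : ν₁ ⊔ theta C one w = p :=
        sup_p ν₁ hν₁ _ hΘwC (hΘwv₂.trans hν₂.2.2.1.le) hΘwv₁
      have htw_η : η.r t w := (hO η hηC t w).mp (e1.trans e2.symm)
      have htw_ν₁ : ν₁.r t w := (hO ν₁ hν₁C t w).mp (e3.trans e4.symm)
      have htw_m : (ν₁ ⊓ ν₂).r t w := hm1 ▸ Setoid.inf_iff_and.mpr ⟨htw_η, htw_ν₁⟩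
      exact hn2 (ν₂.trans' hw2.1 (ν₂.symm' (hmν₂ htw_m)))
    -- main equality
    funext x y
    apply propext
    constructor
    · intro hxy
      refine ⟨hη.2.2.1.le hxy, ?_, ?_⟩
      · intro h
        exact hmν₂ (hm1 ▸ Setoid.inf_iff_and.mpr ⟨hxy, h⟩)
      · intro h
        exact hmν₁ (hm2 ▸ Setoid.inf_iff_and.mpr ⟨hxy, h⟩)
    · rintro ⟨hpxy, hiff⟩
      by_cases hv1 : ν₁.r x y
      · exact hsub (Setoid.inf_iff_and.mpr ⟨hv1, hiff.mp hv1⟩)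
      · have hv2 : ¬ ν₂.r x y := fun h => hv1 (hiff.mpr h)
        have hst1 := star6 hInf hSup hDir hM hO hP hν₁ hpxy hv1
        have hst2 := star6 hInf hSup hDir hM hO hP hν₂ hpxy hv2
        have hp1x : p.r one x := by
          rcases hst1 with h | h
          · exact hν₁.2.2.1.le h
          · exact p.trans' (hν₁.2.2.1.le h) (p.symm' hpxy)
        have hp1y : p.r one y := p.trans' hp1x hpxy
        have hΘxC : theta C one x ∈ C := theta_mem hInf one x
        have hΘyC : theta C one y ∈ C := theta_mem hInf one y
        have hΘxp : theta C one x ≤ p := theta_le hpC hp1x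
        have hΘyp : theta C one y ≤ p := theta_le hpC hp1y
        by_cases hex : η.r one x
        · by_cases hey : η.r one y
          · exact η.trans' (η.symm' hex) hey
          · exfalso
            rcases hst1 with hx1 | hy1
            · have hΘxm : theta C one x ≤ ν₁ ⊓ ν₂ :=
                hm1 ▸ le_inf (theta_le hηC hex) (theta_le hν₁C hx1)
              have hν₂x : ν₂.r one x := (hΘxm.trans inf_le_right) (theta_rel C one x)
              have hn2y : ¬ ν₂.r one y := fun h => hv2 (ν₂.trans' (ν₂.symm' hν₂x) h)
              have hn1y : ¬ ν₁.r one y := fun h => hv1 (ν₁.trans' (ν₁.symm' hx1) h)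
              exact hQ y hp1y hn1y hn2y hey
            · have hν₂x : ν₂.r one x := by
                rcases hst2 with h | h
                · exact h
                · exfalso
                  have hΘym : theta C one y ≤ ν₁ ⊓ ν₂ :=
                    le_inf (theta_le hν₁C hy1) (theta_le hν₂C h)
                  exact hey ((hΘym.trans hsub) (theta_rel C one y))
              have hΘxm : theta C one x ≤ ν₁ ⊓ ν₂ :=
                hm2 ▸ le_inf (theta_le hηC hex) (theta_le hν₂C hν₂x)
              have hν₁x : ν₁.r one x := (hΘxm.trans inf_le_left) (theta_rel C one x)
              exact hv1 (ν₁.trans' (ν₁.symm' hν₁x) hy1)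
        · by_cases hey : η.r one y
          · exfalso
            rcases hst1 with hx1 | hy1
            · have hν₂y : ν₂.r one y := by
                rcases hst2 with h | h
                · exfalso
                  have hΘxm : theta C one x ≤ ν₁ ⊓ ν₂ :=
                    le_inf (theta_le hν₁C hx1) (theta_le hν₂C h)
                  exact hex ((hΘxm.trans hsub) (theta_rel C one x))
                · exact h
              have hΘym : theta C one y ≤ ν₁ ⊓ ν₂ :=
                hm2 ▸ le_inf (theta_le hηC hey) (theta_le hν₂C hν₂y)
              have hν₁y : ν₁.r one y := (hΘym.trans inf_le_left) (theta_rel C one y)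
              exact hv1 (ν₁.trans' (ν₁.symm' hx1) hν₁y)
            · have hΘym : theta C one y ≤ ν₁ ⊓ ν₂ :=
                hm1 ▸ le_inf (theta_le hηC hey) (theta_le hν₁C hy1)
              have hν₂y : ν₂.r one y := (hΘym.trans inf_le_right) (theta_rel C one y)
              have hn2x : ¬ ν₂.r one x := fun h => hv2 (ν₂.trans' (ν₂.symm' h) hν₂y)
              have hn1x : ¬ ν₁.r one x := fun h => hv1 (ν₁.trans' (ν₁.symm' h) hy1)
              exact hQ x hp1x hn1x hn2x hex
          · have f1 : η ⊔ theta C one x = p :=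
              sup_p η hη _ hΘxC hΘxp (fun h => hex (h (theta_rel C one x)))
            have f2 : η ⊔ theta C one y = p :=
              sup_p η hη _ hΘyC hΘyp (fun h => hey (h (theta_rel C one y)))
            exact (hO η hηC x y).mp (f1.trans f2.symm)
end

section
/- Assume conditions (M), (O), (R), (P) and (D). Let η ∈ Cm, U := η/∼, and let α₁, …, αₙ ∈ C with α₁ ⊓ ⋯ ⊓ αₙ ≤ η. Then there exist μ₁, …, μₙ ∈ U ∪ {⊤} such that αᵢ ≤ μᵢ for i = 1, …, n, μ₁ ⊓ ⋯ ⊓ μₙ ≤ η, and η = μ_{i₁} • ⋯ • μ_{i_k} for some 1 ≤ i₁ < … < i_k ≤ n; in other words, η belongs to the subgroup of the Boolean group (Ū, •) generated by {μ₁, …, μₙ} \ {⊤}. (This is Proposition 15 of Section 3 of the paper, strengthening the decomposition theorem.) -/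
variable {A : Type*}

/-- Iterated `•` product (with unit the cover relation `p`) of a list of relations. -/
def BulList (p : A → A → Prop) : List (A → A → Prop) → A → A → Prop
  | [] => p
  | r :: l => fun x y => p x y ∧ (r x y ↔ BulList p l x y)


section Stmt12AuxSection

variable {A : Type*}

namespace Stmt12Aux

lemma rel_of_le {x y : Setoid A} (h : x ≤ y) {a b : A} (hab : x.r a b) : y.r a b := h hab

lemma theta_mem {C : Set (Setoid A)} (hInf : ∀ S ⊆ C, sInf S ∈ C) (a b : A) :
    theta C a b ∈ C := hInf _ fun _ hs => hs.1

lemma theta_rel {C : Set (Setoid A)} (a b : A) : (theta C a b).r a b :=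
  fun _ hs => hs.2

lemma theta_le {C : Set (Setoid A)} {δ : Setoid A} (hδ : δ ∈ C) {a b : A} (h : δ.r a b) :
    theta C a b ≤ δ := sInf_le ⟨hδ, h⟩

lemma join_mem {C : Set (Setoid A)} (hSup : ∀ S ⊆ C, sSup S ∈ C) {x y : Setoid A}
    (hx : x ∈ C) (hy : y ∈ C) : x ⊔ y ∈ C := by
  have h := hSup {x, y} (by rintro s (rfl | rfl) <;> assumption)
  rwa [sSup_pair] at h

lemma meet_mem {C : Set (Setoid A)} (hInf : ∀ S ⊆ C, sInf S ∈ C) {x y : Setoid A}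
    (hx : x ∈ C) (hy : y ∈ C) : x ⊓ y ∈ C := by
  have h := hInf {x, y} (by rintro s (rfl | rfl) <;> assumption)
  rwa [sInf_pair] at h

lemma cover_le {C : Set (Setoid A)} {γ p β : Setoid A} (hγ : IsCMI C γ p) (hβ : β ∈ C)
    (h : γ < β) : p ≤ β := hγ.2.2.2 β hβ h

/-- If a CMI is below another congruence that is below its own cover, they are equal. -/
lemma eq_of_le_of_lt_cover {C : Set (Setoid A)} {γ η p : Setoid A} (hγ : IsCMI C γ p)
    (hηC : η ∈ C) (hle : γ ≤ η) (hlt : η < p) : γ = η := by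
  rcases lt_or_eq_of_le hle with h | h
  · exact absurd (cover_le hγ hηC h) (not_le_of_gt hlt)
  · exact h

lemma cover_unique {C : Set (Setoid A)} {η p q : Setoid A}
    (h1 : IsCMI C η p) (h2 : IsCMI C η q) : p = q :=
  le_antisymm (h1.2.2.2 q h2.2.1 h2.2.2.1) (h2.2.2.2 p h1.2.1 h1.2.2.1)

lemma persp_symm {C : Set (Setoid A)} {pq rs : Setoid A × Setoid A}
    (h : Persp C pq rs) : Persp C rs pq :=
  ⟨h.2.2.1, h.2.2.2.1, h.1, h.2.1, h.2.2.2.2.symm⟩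

lemma projective_symm {C : Set (Setoid A)} {a b : Setoid A × Setoid A}
    (h : Projective C a b) : Projective C b a := by
  induction h with
  | refl => exact .refl
  | tail _ h2 ih => exact Relation.ReflTransGen.head (persp_symm h2) ih

lemma pip_refl {C : Set (Setoid A)} {η p : Setoid A} (hη : IsCMI C η p) : PIP C η η :=
  ⟨p, p, hη, hη, .refl⟩

section
variable {C : Set (Setoid A)}

lemma pip_cover (hP : ∀ φ ψ p q : Setoid A, IsCMI C φ p → IsCMI C ψ q →
      Projective C (φ, p) (ψ, q) → p = q) {ψ η p : Setoid A} (h : PIP C ψ η) (hη : IsCMI C η p) : IsCMI C ψ p := by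
  obtain ⟨a, b, hψa, hηb, hproj⟩ := h
  have hab : a = b := hP ψ η a b hψa hηb hproj
  have hbp : b = p := cover_unique hηb hη
  exact (hab.trans hbp) ▸ hψa

lemma pip_trans {φ ψ χ : Setoid A} (h1 : PIP C φ ψ) (h2 : PIP C ψ χ) : PIP C φ χ := by
  obtain ⟨a, b, hφa, hψb, p1⟩ := h1
  obtain ⟨c, d, hψc, hχd, p2⟩ := h2
  have hbc : b = c := cover_unique hψb hψc
  subst hbc
  exact ⟨a, d, hφa, hχd, p1.trans p2⟩

end

section Main

variable {C : Set (Setoid A)}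

/-- If `z` is in the `1`-class of `p` but not of `γ`, then `γ ⊔ Θ(1,z) = p`. -/
lemma join_point (one : A) (hInf : ∀ S ⊆ C, sInf S ∈ C) (hSup : ∀ S ⊆ C, sSup S ∈ C)
    {γ p : Setoid A} (hγ : IsCMI C γ p) {z : A}
    (hz : p.r one z) (hnz : ¬ γ.r one z) : γ ⊔ theta C one z = p := by
  have hθC := theta_mem (C := C) hInf one z
  have hθp : theta C one z ≤ p := theta_le hγ.2.1 hz
  refine le_antisymm (sup_le hγ.2.2.1.le hθp) (cover_le hγ (join_mem hSup hγ.1 hθC) ?_)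
  refine lt_of_le_of_ne le_sup_left fun h => hnz ?_
  exact rel_of_le (le_sup_right.trans h.ge) (theta_rel one z)

/-- The key parity ("index two") lemma: if two consecutive pairs inside a block of the
cover `p` are not `γ`-related, then the outer pair is `γ`-related. -/
lemma zlemma (one : A) (hInf : ∀ S ⊆ C, sInf S ∈ C) (hSup : ∀ S ⊆ C, sSup S ∈ C)
    (hO : ∀ α ∈ C, ∀ a b : A, α ⊔ theta C one a = α ⊔ theta C one b ↔ α.r a b)
    {γ p : Setoid A} (hγ : IsCMI C γ p) {s t r : A}
    (hst : p.r s t) (htr : p.r t r) (h1 : ¬ γ.r s t) (h2 : ¬ γ.r t r) : γ.r s r := by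
  by_contra h3
  have hpC : p ∈ C := hγ.2.1
  have hγC : γ ∈ C := hγ.1
  have hsr : p.r s r := p.trans' hst htr
  have hJC : ∀ a : A, theta C one a ∈ C := fun a => theta_mem hInf one a
  have hgC : ∀ a : A, γ ⊔ theta C one a ∈ C := fun a => join_mem hSup hγC (hJC a)
  have hPt : p ⊔ theta C one t = p ⊔ theta C one s := (hO p hpC t s).mpr (p.symm' hst)
  have hPr : p ⊔ theta C one r = p ⊔ theta C one s := (hO p hpC r s).mpr (p.symm' hsr)
  have hPs : p ⊔ theta C one s = p ⊔ theta C one s := rfl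
  have key : ∀ a b : A, p ⊔ theta C one a = p ⊔ theta C one s →
      p ⊔ theta C one b = p ⊔ theta C one s → p.r a b → ¬ γ.r a b →
      (γ ⊔ theta C one a) ⊔ theta C one b = p ⊔ theta C one s := by
    intro a b hpa hpb hpab hnab
    have hθabC : theta C a b ∈ C := theta_mem hInf a b
    have hnle : ¬ theta C a b ≤ γ := fun h => hnab (rel_of_le h (theta_rel a b))
    have hcov : p ≤ γ ⊔ theta C a b := by
      refine cover_le hγ (join_mem hSup hγC hθabC) ?_
      exact lt_of_le_of_ne le_sup_left fun h => hnle (le_sup_right.trans h.ge)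
    have hθab2 : theta C a b ≤ theta C one a ⊔ theta C one b := by
      refine theta_le (join_mem hSup (hJC a) (hJC b)) ?_
      have h1a : (theta C one a ⊔ theta C one b).r one a :=
        rel_of_le le_sup_left (theta_rel one a)
      have h1b : (theta C one a ⊔ theta C one b).r one b :=
        rel_of_le le_sup_right (theta_rel one b)
      exact Setoid.trans' _ (Setoid.symm' _ h1a) h1b
    refine le_antisymm (sup_le (sup_le ?_ ?_) ?_) ?_
    · exact hγ.2.2.1.le.trans le_sup_left
    · exact le_sup_right.trans hpa.le
    · exact le_sup_right.trans hpb.le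
    · rw [← hpa]
      refine sup_le (hcov.trans ?_) (le_sup_right.trans le_sup_left)
      refine sup_le (le_sup_left.trans le_sup_left) (hθab2.trans ?_)
      exact sup_le (le_sup_right.trans le_sup_left) le_sup_right
  have hne_st : γ ⊔ theta C one s ≠ γ ⊔ theta C one t := fun h => h1 ((hO γ hγC s t).mp h)
  have hbit : ∀ a : A, p ⊔ theta C one a = p ⊔ theta C one s →
      (γ ⊔ theta C one a) ⊓ p = γ ∨ γ ⊔ theta C one a = p ⊔ theta C one s := by
    intro a hpa
    by_cases hm : (γ ⊔ theta C one a) ⊓ p = γ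
    · exact Or.inl hm
    · right
      have hγm : γ ≤ (γ ⊔ theta C one a) ⊓ p := le_inf le_sup_left hγ.2.2.1.le
      have hmem : (γ ⊔ theta C one a) ⊓ p ∈ C := meet_mem hInf (hgC a) hpC
      have hplem : p ≤ (γ ⊔ theta C one a) ⊓ p :=
        cover_le hγ hmem (lt_of_le_of_ne hγm (Ne.symm fun h => hm h))
      have hple : p ≤ γ ⊔ theta C one a := hplem.trans inf_le_left
      refine le_antisymm (sup_le (hγ.2.2.1.le.trans le_sup_left) (le_sup_right.trans hpa.le)) ?_
      rw [← hpa]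
      exact sup_le hple le_sup_right
  rcases hbit s hPs with hb | hb
  · have e1 : (γ ⊔ theta C one s) ⊔ theta C one t = p ⊔ theta C one s :=
      key s t hPs hPt hst h1
    have e2 : (γ ⊔ theta C one s) ⊔ theta C one r = p ⊔ theta C one s :=
      key s r hPs hPr hsr h3
    have htr' : (γ ⊔ theta C one s).r t r := (hO _ (hgC s) t r).mp (e1.trans e2.symm)
    have hfin : ((γ ⊔ theta C one s) ⊓ p).r t r := ⟨htr', htr⟩
    rw [hb] at hfin
    exact h2 hfin
  · rcases hbit t hPt with hb' | hb'
    · have e1 : (γ ⊔ theta C one t) ⊔ theta C one s = p ⊔ theta C one s :=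
        key t s hPt hPs (p.symm' hst) (fun h => h1 (γ.symm' h))
      have e2 : (γ ⊔ theta C one t) ⊔ theta C one r = p ⊔ theta C one s :=
        key t r hPt hPr htr h2
      have hsr' : (γ ⊔ theta C one t).r s r := (hO _ (hgC t) s r).mp (e1.trans e2.symm)
      have hfin : ((γ ⊔ theta C one t) ⊓ p).r s r := ⟨hsr', hsr⟩
      rw [hb'] at hfin
      exact h3 hfin
    · exact hne_st (hb.trans hb'.symm)

end Main

section Crux

variable (one : A) {C : Set (Setoid A)}

lemma inf_le_third (hInf : ∀ S ⊆ C, sInf S ∈ C) (hSup : ∀ S ⊆ C, sSup S ∈ C)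
    (hM : ∀ x ∈ C, ∀ y ∈ C, ∀ z ∈ C, x ≤ z → x ⊔ y ⊓ z = (x ⊔ y) ⊓ z)
    {φ ψ η p : Setoid A} (hφ : IsCMI C φ p) (hψ : IsCMI C ψ p) (hη : IsCMI C η p)
    (hq : φ ⊓ ψ ≤ η) (hne : η ≠ φ) : η ⊓ φ ≤ ψ := by
  by_contra hm
  have hmC : η ⊓ φ ∈ C := meet_mem hInf hη.1 hφ.1
  have hjoin : (η ⊓ φ) ⊔ ψ = p := by
    refine le_antisymm (sup_le (inf_le_left.trans hη.2.2.1.le) hψ.2.2.1.le)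
      (cover_le hψ (join_mem hSup hmC hψ.1) ?_)
    exact lt_of_le_of_ne le_sup_right fun h => hm (le_sup_left.trans h.ge)
  have hmod := hM (η ⊓ φ) hmC ψ hψ.1 φ hφ.1 inf_le_right
  rw [hjoin, inf_eq_right.mpr hφ.2.2.1.le] at hmod
  have hφη : φ ≤ η := by
    rw [← hmod]
    exact sup_le inf_le_left ((inf_comm ψ φ).le.trans hq)
  have : φ = η := eq_of_le_of_lt_cover hφ hη.1 hφη hη.2.2.1
  exact hne this.symm

lemma crux (hInf : ∀ S ⊆ C, sInf S ∈ C) (hSup : ∀ S ⊆ C, sSup S ∈ C)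
    (hM : ∀ x ∈ C, ∀ y ∈ C, ∀ z ∈ C, x ≤ z → x ⊔ y ⊓ z = (x ⊔ y) ⊓ z)
    (hO : ∀ α ∈ C, ∀ a b : A, α ⊔ theta C one a = α ⊔ theta C one b ↔ α.r a b)
    (hR : ∀ α ∈ C, ∀ β ∈ C, (∀ x : A, α.r one x ↔ β.r one x) → α = β)
    {φ ψ η p : Setoid A} (hφ : IsCMI C φ p) (hψ : IsCMI C ψ p) (hη : IsCMI C η p)
    (hq : φ ⊓ ψ ≤ η) (hneφ : η ≠ φ) (hneψ : η ≠ ψ) (x y : A) :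
    η.r x y ↔ (p.r x y ∧ (φ.r x y ↔ ψ.r x y)) := by
  have hηφψ : η ⊓ φ ≤ ψ := inf_le_third hInf hSup hM hφ hψ hη hq hneφ
  have hηψφ : η ⊓ ψ ≤ φ := inf_le_third hInf hSup hM hψ hφ hη ((inf_comm ψ φ).le.trans hq) hneψ
  have chi : ∀ γ : Setoid A, IsCMI C γ p → ∀ a b : A, p.r one a → p.r one b →
      ¬ γ.r one a → ¬ γ.r one b → γ.r a b := by
    intro γ hγ a b hpa hpb hna hnb
    exact (hO γ hγ.1 a b).mp
      ((join_point one hInf hSup hγ hpa hna).trans (join_point one hInf hSup hγ hpb hnb).symm)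
  have sver : ∀ a : A, p.r one a → ¬ φ.r one a → ¬ ψ.r one a → theta C one a ≤ η := by
    intro a hpa haφ haψ
    by_contra hno
    have hηa : ¬ η.r one a := fun h => hno (theta_le hη.1 h)
    have key : ∀ z : A, η.r one z ↔ (φ ⊓ ψ).r one z := by
      intro z
      constructor
      · intro hz
        have hpz : p.r one z := rel_of_le hη.2.2.1.le hz
        by_cases hzφ : φ.r one z
        · exact ⟨hzφ, hηφψ ⟨hz, hzφ⟩⟩
        · by_cases hzψ : ψ.r one z
          · exact ⟨hηψφ ⟨hz, hzψ⟩, hzψ⟩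
          · exfalso
            have hφza : φ.r z a := chi φ hφ z a hpz hpa hzφ haφ
            have hψza : ψ.r z a := chi ψ hψ z a hpz hpa hzψ haψ
            exact hηa (η.trans' hz (hq ⟨hφza, hψza⟩))
      · intro hz
        exact hq hz
    have heq : η = φ ⊓ ψ := hR η hη.1 (φ ⊓ ψ) (meet_mem hInf hφ.1 hψ.1) key
    have hle : η ≤ φ := heq.le.trans inf_le_left
    exact hneφ (eq_of_le_of_lt_cover hη hφ.1 hle hφ.2.2.1)
  have base : ∀ a : A, p.r one a → ∀ u v : A, (theta C one a).r u v →
      p.r u v ∧ (η.r u v ↔ (φ.r u v ↔ ψ.r u v)) := by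
    intro a hpa u v huv
    have hpuv : p.r u v := rel_of_le (theta_le hη.2.1 hpa) huv
    refine ⟨hpuv, ?_⟩
    by_cases haφ : φ.r one a
    · have hf : φ.r u v := rel_of_le (theta_le hφ.1 haφ) huv
      exact ⟨fun he => iff_of_true hf (hηφψ ⟨he, hf⟩), fun hiff => hq ⟨hf, hiff.mp hf⟩⟩
    · by_cases haψ : ψ.r one a
      · have hf : ψ.r u v := rel_of_le (theta_le hψ.1 haψ) huv
        exact ⟨fun he => iff_of_true (hηψφ ⟨he, hf⟩) hf, fun hiff => hq ⟨hiff.mpr hf, hf⟩⟩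
      · have he : η.r u v := rel_of_le (sver a hpa haφ haψ) huv
        exact ⟨fun _ => ⟨fun hf => hηφψ ⟨he, hf⟩, fun hfψ => hηψφ ⟨he, hfψ⟩⟩, fun _ => he⟩
  have par : ∀ γ : Setoid A, IsCMI C γ p → ∀ u v w : A, p.r u v → p.r v w →
      (γ.r u w ↔ (γ.r u v ↔ γ.r v w)) := by
    intro γ hγ u v w hpuv hpvw
    by_cases h1 : γ.r u v <;> by_cases h2 : γ.r v w
    · exact iff_of_true (γ.trans' h1 h2) (iff_of_true h1 h2)
    · exact iff_of_false (fun h => h2 (γ.trans' (γ.symm' h1) h)) (fun hc => h2 (hc.mp h1))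
    · exact iff_of_false (fun h => h1 (γ.trans' h (γ.symm' h2))) (fun hc => h1 (hc.mpr h2))
    · exact iff_of_true (zlemma one hInf hSup hO hγ hpuv hpvw h1 h2) (iff_of_false h1 h2)
  have good : ∀ u v : A, p.r u v → (p.r u v ∧ (η.r u v ↔ (φ.r u v ↔ ψ.r u v))) := by
    have hSC : {s : Setoid A | ∃ a : A, p.r one a ∧ s = theta C one a} ⊆ C := by
      rintro s ⟨a, _, rfl⟩
      exact theta_mem hInf one a
    have hle1 : sSup {s : Setoid A | ∃ a : A, p.r one a ∧ s = theta C one a} ≤ p := by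
      refine sSup_le ?_
      rintro s ⟨a, ha, rfl⟩
      exact theta_le hη.2.1 ha
    have hGp : sSup {s : Setoid A | ∃ a : A, p.r one a ∧ s = theta C one a} = p := by
      refine hR _ (hSup _ hSC) p hη.2.1 fun z => ⟨fun h => rel_of_le hle1 h, fun h => ?_⟩
      have hmem : theta C one z ∈ {s : Setoid A | ∃ a : A, p.r one a ∧ s = theta C one a} :=
        ⟨z, h, rfl⟩
      exact rel_of_le (le_sSup hmem) (theta_rel one z)
    intro u v huv
    rw [← hGp] at huv
    rw [Setoid.sSup_eq_eqvGen] at huv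
    have huv' : Relation.EqvGen
        (fun a b => ∃ r : Setoid A,
          r ∈ {s : Setoid A | ∃ c : A, p.r one c ∧ s = theta C one c} ∧ r a b) u v := huv
    clear huv
    induction huv' with
    | rel a b h =>
      obtain ⟨s, ⟨c, hc, rfl⟩, hs⟩ := h
      exact base c hc a b hs
    | refl a =>
      exact ⟨p.refl' a, iff_of_true (η.refl' a) (iff_of_true (φ.refl' a) (ψ.refl' a))⟩
    | symm a b h ih =>
      refine ⟨p.symm' ih.1, ⟨fun he => ?_, fun hiff => ?_⟩⟩
      · have h2 := ih.2.mp (η.symm' he)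
        exact ⟨fun hf => ψ.symm' (h2.mp (φ.symm' hf)), fun hf => φ.symm' (h2.mpr (ψ.symm' hf))⟩
      · refine η.symm' (ih.2.mpr ?_)
        exact ⟨fun hf => ψ.symm' (hiff.mp (φ.symm' hf)), fun hf => φ.symm' (hiff.mpr (ψ.symm' hf))⟩
    | trans a b c hab hbc ih1 ih2 =>
      refine ⟨p.trans' ih1.1 ih2.1, ?_⟩
      rw [par η hη a b c ih1.1 ih2.1, par φ hφ a b c ih1.1 ih2.1,
        par ψ hψ a b c ih1.1 ih2.1, ih1.2, ih2.2]
      by_cases e1 : φ.r a b <;> by_cases e2 : ψ.r a b <;>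
        by_cases e3 : φ.r b c <;> by_cases e4 : ψ.r b c <;>
        simp [e1, e2, e3, e4]
  constructor
  · intro he
    have hp : p.r x y := rel_of_le hη.2.2.1.le he
    exact ⟨hp, (good x y hp).2.mp he⟩
  · rintro ⟨hp, hiff⟩
    exact (good x y hp).2.mpr hiff

end Crux

end Stmt12Aux

lemma stmt12_bul_single {η p : Setoid A} (h : η ≤ p) : η.r = BulList p.r [η.r] := by
  funext x y
  apply propext
  show η.r x y ↔ (p.r x y ∧ (η.r x y ↔ p.r x y))
  exact ⟨fun he => ⟨h he, iff_of_true he (h he)⟩, fun hc => hc.2.mpr hc.1⟩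

lemma stmt12_iInf_fin_succ {n : ℕ} (f : Fin (n + 1) → Setoid A) :
    (⨅ i, f i) = f 0 ⊓ ⨅ j : Fin n, f j.succ := by
  apply le_antisymm
  · exact le_inf (iInf_le f 0) (le_iInf fun j => iInf_le f j.succ)
  · refine le_iInf fun i => ?_
    refine Fin.cases ?_ ?_ i
    · exact inf_le_left
    · exact fun j => inf_le_right.trans (iInf_le _ j)

lemma stmt12_iInf_mem {n : ℕ} {C : Set (Setoid A)} (hInf : ∀ S ⊆ C, sInf S ∈ C)
    (f : Fin n → Setoid A) (hf : ∀ i, f i ∈ C) : (⨅ i, f i) ∈ C := by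
  rw [iInf]
  exact hInf _ (by rintro s ⟨i, rfl⟩; exact hf i)


open Stmt12Aux in
theorem stmt12_main (one : A) (C : Set (Setoid A))
    (hInf : ∀ S ⊆ C, sInf S ∈ C) (hSup : ∀ S ⊆ C, sSup S ∈ C)
    (hM : ∀ x ∈ C, ∀ y ∈ C, ∀ z ∈ C, x ≤ z → x ⊔ y ⊓ z = (x ⊔ y) ⊓ z)
    (hO : ∀ α ∈ C, ∀ a b : A, α ⊔ theta C one a = α ⊔ theta C one b ↔ α.r a b)
    (hR : ∀ α ∈ C, ∀ β ∈ C, (∀ x : A, α.r one x ↔ β.r one x) → α = β)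
    (hP : ∀ φ ψ p q : Setoid A, IsCMI C φ p → IsCMI C ψ q →
      Projective C (φ, p) (ψ, q) → p = q)
    (hD : ∀ α ∈ C, ∀ β ∈ C, ∀ η p, IsCMI C η p → α ⊓ β ≤ η →
      ∃ μ₁ μ₂ : Setoid A, (μ₁ = ⊤ ∨ PIP C μ₁ η) ∧ (μ₂ = ⊤ ∨ PIP C μ₂ η) ∧
        α ≤ μ₁ ∧ β ≤ μ₂ ∧ μ₁ ⊓ μ₂ ≤ η)
    (η p : Setoid A) (hη : IsCMI C η p) {n : ℕ} (α : Fin n → Setoid A)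
    (hαC : ∀ i, α i ∈ C) (hle : (⨅ i, α i) ≤ η) :
    ∃ μ : Fin n → Setoid A,
      (∀ i, μ i = ⊤ ∨ PIP C (μ i) η) ∧ (∀ i, α i ≤ μ i) ∧ (⨅ i, μ i) ≤ η ∧
      ∃ l : List (Fin n), l.Chain' (· < ·) ∧ (∀ i ∈ l, μ i ≠ ⊤) ∧
        η.r = BulList p.r (l.map fun i => (μ i).r) := by
  suffices h : ∀ (m : ℕ) (β : Fin m → Setoid A), (∀ i, β i ∈ C) →
      ∀ η' : Setoid A, IsCMI C η' p → (⨅ i, β i) ≤ η' →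
      ∃ μ : Fin m → Setoid A,
        (∀ i, μ i = ⊤ ∨ PIP C (μ i) η') ∧ (∀ i, β i ≤ μ i) ∧ (⨅ i, μ i) ≤ η' ∧
        ∃ l : List (Fin m), l.Chain' (· < ·) ∧ (∀ i ∈ l, μ i ≠ ⊤) ∧
          η'.r = BulList p.r (l.map fun i => (μ i).r) by
    exact h n α hαC η hη hle
  intro m
  induction m with
  | zero =>
    intro β hβC η' hη' hle'
    exfalso
    have htop : (⊤ : Setoid A) ≤ η' := by
      have he : (⨅ i : Fin 0, β i) = ⊤ := iInf_of_empty β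
      rwa [he] at hle'
    exact absurd (le_top.trans htop : p ≤ η') (not_le_of_gt hη'.2.2.1)
  | succ m ih =>
    intro β hβC η' hη' hle'
    have hηp : η' ≤ p := hη'.2.2.1.le
    have hηnetop : η' ≠ ⊤ := by
      intro h
      have hple : p ≤ η' := by rw [h]; exact le_top
      exact absurd hple (not_le_of_gt hη'.2.2.1)
    have htailC : ∀ j : Fin m, β j.succ ∈ C := fun j => hβC j.succ
    have htailmem : (⨅ j : Fin m, β j.succ) ∈ C := stmt12_iInf_mem hInf _ htailC
    have hmeet0 : β 0 ⊓ (⨅ j : Fin m, β j.succ) ≤ η' := by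
      rw [← stmt12_iInf_fin_succ β]; exact hle'
    obtain ⟨μ₀, ν, hμor, hνor, h0le, htle, hμν⟩ :=
      hD (β 0) (hβC 0) _ htailmem η' p hη' hmeet0
    have tailsol : ∀ c : Setoid A, (c = ⊤ ∨ PIP C c η') → β 0 ≤ c →
        (⨅ j : Fin m, β j.succ) ≤ η' →
        (∃ μ : Fin (m+1) → Setoid A,
          (∀ i, μ i = ⊤ ∨ PIP C (μ i) η') ∧ (∀ i, β i ≤ μ i) ∧ (⨅ i, μ i) ≤ η' ∧
          ∃ l : List (Fin (m+1)), l.Chain' (· < ·) ∧ (∀ i ∈ l, μ i ≠ ⊤) ∧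
            η'.r = BulList p.r (l.map fun i => (μ i).r)) := by
      intro c hcor hc hti
      obtain ⟨μ', hPIP', hle'', hinf', l', hch', htop', hprod'⟩ :=
        ih (fun j => β j.succ) htailC η' hη' hti
      refine ⟨Fin.cases c μ', ?_, ?_, ?_, l'.map Fin.succ, ?_, ?_, ?_⟩
      · intro i
        refine Fin.cases ?_ ?_ i
        · simpa using hcor
        · intro j; simpa using hPIP' j
      · intro i
        refine Fin.cases ?_ ?_ i
        · simpa using hc
        · intro j; simpa using hle'' j
      · have h1 : (⨅ i, (Fin.cases c μ' : Fin (m+1) → Setoid A) i) ≤ ⨅ j : Fin m, μ' j := by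
          refine le_iInf fun j => ?_
          have h2 := iInf_le (Fin.cases c μ' : Fin (m+1) → Setoid A) j.succ
          simpa using h2
        exact h1.trans hinf'
      · unfold List.Chain' at hch' ⊢; rw [List.isChain_map]
        exact hch'.imp fun a b hab => Fin.succ_lt_succ_iff.mpr hab
      · intro i hi
        obtain ⟨j, hj, rfl⟩ := List.mem_map.mp hi
        simpa using htop' j hj
      · rw [List.map_map]
        have h3 : ((fun i => ((Fin.cases c μ' : Fin (m+1) → Setoid A) i).r) ∘ Fin.succ) =
            fun j : Fin m => (μ' j).r := by
          funext j; simp; rfl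
        rw [h3]
        exact hprod'
    by_cases hb0 : β 0 ≤ η'
    · -- singleton solution
      refine ⟨Fin.cases η' (fun _ => ⊤), ?_, ?_, ?_, [0], ?_, ?_, ?_⟩
      · intro i
        refine Fin.cases ?_ ?_ i
        · simpa using Or.inr (pip_refl hη')
        · intro j; simp
      · intro i
        refine Fin.cases ?_ ?_ i
        · simpa using hb0
        · intro j; simp
      · have h4 := iInf_le (Fin.cases η' (fun _ => ⊤) : Fin (m+1) → Setoid A) 0
        simpa using h4
      · exact List.isChain_singleton _
      · intro i hi
        rw [List.mem_singleton] at hi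
        subst hi
        simpa using hηnetop
      · have h5 : (List.map (fun i => ((Fin.cases η' (fun _ => ⊤) : Fin (m+1) → Setoid A) i).r)
            [0]) = [η'.r] := by simp; rfl
        rw [h5]
        exact stmt12_bul_single hηp
    · by_cases hμtop : μ₀ = ⊤
      · have hνle : ν ≤ η' := by
          rw [hμtop, top_inf_eq] at hμν; exact hμν
        have hνnetop : ν ≠ ⊤ := by
          intro h
          rw [h] at hνle
          exact hηnetop (top_le_iff.mp hνle)
        have hνPIP : PIP C ν η' := hνor.resolve_left hνnetop
        have hνCMI : IsCMI C ν p := pip_cover hP hνPIP hη'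
        have hνeq : ν = η' := eq_of_le_of_lt_cover hνCMI hη'.1 hνle hη'.2.2.1
        exact tailsol ⊤ (Or.inl rfl) le_top (hνeq ▸ htle)
      · have hμPIP : PIP C μ₀ η' := hμor.resolve_left hμtop
        have hμCMI : IsCMI C μ₀ p := pip_cover hP hμPIP hη'
        have hνnetop : ν ≠ ⊤ := by
          intro h
          rw [h, inf_top_eq] at hμν
          exact hb0 (h0le.trans hμν)
        have hνPIP : PIP C ν η' := hνor.resolve_left hνnetop
        have hνCMI : IsCMI C ν p := pip_cover hP hνPIP hη'
        by_cases hνeq : ν = η'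
        · exact tailsol μ₀ (Or.inr hμPIP) h0le (hνeq ▸ htle)
        · have hneφ : η' ≠ μ₀ := by
            intro h
            exact hb0 (by rw [h]; exact h0le)
          have hneψ : η' ≠ ν := fun h => hνeq h.symm
          have hcx := crux one hInf hSup hM hO hR hμCMI hνCMI hη' hμν hneφ hneψ
          obtain ⟨μ', hPIP', hle'', hinf', l', hch', htop', hprod'⟩ :=
            ih (fun j => β j.succ) htailC ν hνCMI htle
          refine ⟨Fin.cases μ₀ μ', ?_, ?_, ?_, 0 :: l'.map Fin.succ, ?_, ?_, ?_⟩
          · intro i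
            refine Fin.cases ?_ ?_ i
            · simpa using Or.inr hμPIP
            · intro j
              rcases hPIP' j with h | h
              · simp [h]
              · simpa using Or.inr (pip_trans h hνPIP)
          · intro i
            refine Fin.cases ?_ ?_ i
            · simpa using h0le
            · intro j; simpa using hle'' j
          · have h1 : (⨅ i, (Fin.cases μ₀ μ' : Fin (m+1) → Setoid A) i) ≤ μ₀ ⊓ ν := by
              refine le_inf ?_ ?_
              · have h2 := iInf_le (Fin.cases μ₀ μ' : Fin (m+1) → Setoid A) 0
                simpa using h2
              · refine le_trans (le_iInf fun j => ?_) hinf'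
                have h2 := iInf_le (Fin.cases μ₀ μ' : Fin (m+1) → Setoid A) j.succ
                simpa using h2
            exact h1.trans hμν
          · unfold List.Chain'; rw [List.isChain_cons]
            constructor
            · intro b hb
              have hbmem := List.mem_of_mem_head? hb
              obtain ⟨j, hj, rfl⟩ := List.mem_map.mp hbmem
              exact Fin.succ_pos j
            · unfold List.Chain' at hch'; rw [List.isChain_map]
              exact hch'.imp fun a b hab => Fin.succ_lt_succ_iff.mpr hab
          · intro i hi
            rcases List.mem_cons.mp hi with rfl | hi'
            · simpa using hμtop
            · obtain ⟨j, hj, rfl⟩ := List.mem_map.mp hi'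
              simpa using htop' j hj
          · have hl : ((0 :: l'.map Fin.succ).map
                fun i => ((Fin.cases μ₀ μ' : Fin (m+1) → Setoid A) i).r)
                = μ₀.r :: l'.map fun j => (μ' j).r := by
              simp only [List.map_cons, List.map_map, Fin.cases_zero]
              exact congrArg _ (List.map_congr_left fun j hj => by simp; rfl)
            rw [hl]
            funext u v
            apply propext
            show η'.r u v ↔ (p.r u v ∧ (μ₀.r u v ↔ BulList p.r (l'.map fun j => (μ' j).r) u v))
            rw [← hprod']
            exact hcx u v



end Stmt12AuxSection

/-- Proposition 15 (Section 3): if `α₁ ⊓ ⋯ ⊓ αₙ ≤ η` with `η ∈ Cm`, then there are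
`μ₁, …, μₙ ∈ U ∪ {⊤}` (where `U = η/∼`) with `αᵢ ≤ μᵢ`, `μ₁ ⊓ ⋯ ⊓ μₙ ≤ η`, and `η`
is the `•`-product of some strictly increasing subfamily of the `μᵢ` different
from `⊤`, i.e. `η` lies in the subgroup of `(Ū, •)` generated by
`{μ₁, …, μₙ} \ {⊤}`. -/
theorem stmt12 (one : A) (C : Set (Setoid A))
    (hInf : ∀ S ⊆ C, sInf S ∈ C) (hSup : ∀ S ⊆ C, sSup S ∈ C)
    (hDir : ∀ D ⊆ C, D.Nonempty → DirectedOn (· ≤ ·) D →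
      ∀ x y : A, (sSup D).r x y ↔ ∃ s ∈ D, s.r x y)
    (hM : ∀ x ∈ C, ∀ y ∈ C, ∀ z ∈ C, x ≤ z → x ⊔ y ⊓ z = (x ⊔ y) ⊓ z)
    (hO : ∀ α ∈ C, ∀ a b : A, α ⊔ theta C one a = α ⊔ theta C one b ↔ α.r a b)
    (hR : ∀ α ∈ C, ∀ β ∈ C, (∀ x : A, α.r one x ↔ β.r one x) → α = β)
    (hP : ∀ φ ψ p q : Setoid A, IsCMI C φ p → IsCMI C ψ q →
      Projective C (φ, p) (ψ, q) → p = q)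
    (hD : ∀ α ∈ C, ∀ β ∈ C, ∀ η p, IsCMI C η p → α ⊓ β ≤ η →
      ∃ μ₁ μ₂ : Setoid A, (μ₁ = ⊤ ∨ PIP C μ₁ η) ∧ (μ₂ = ⊤ ∨ PIP C μ₂ η) ∧
        α ≤ μ₁ ∧ β ≤ μ₂ ∧ μ₁ ⊓ μ₂ ≤ η)
    (η p : Setoid A) (hη : IsCMI C η p) {n : ℕ} (α : Fin n → Setoid A)
    (hαC : ∀ i, α i ∈ C) (hle : (⨅ i, α i) ≤ η) :
    ∃ μ : Fin n → Setoid A,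
      (∀ i, μ i = ⊤ ∨ PIP C (μ i) η) ∧ (∀ i, α i ≤ μ i) ∧ (⨅ i, μ i) ≤ η ∧
      ∃ l : List (Fin n), l.Chain' (· < ·) ∧ (∀ i ∈ l, μ i ≠ ⊤) ∧
        η.r = BulList p.r (l.map fun i => (μ i).r) := by
  exact stmt12_main one C hInf hSup hM hO hR hP hD η p hη α hαC hle
end

section
/- Assume conditions (M), (O), (R), (P) and (D). Let S be a finite member of 𝒮 and let μ ∈ Cm be such that ⋀S ≤ μ. Then μ ∈ S. (This is Lemma 17 of the paper.) -/
variable {A : Type*}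

/-- `S ∈ 𝒮`: `S` is an upward closed subset of `Cm` such that for every PIP class `U`
(of an element `η` with cover `p`), the set `(S ∩ U) ∪ {p}` is closed under the Boolean
group operation `•` of `(Ū, •)`. -/
def InCalS (C : Set (Setoid A)) (S : Set (Setoid A)) : Prop :=
  (∀ μ ∈ S, ∃ p, IsCMI C μ p) ∧
  (∀ μ ∈ S, ∀ ν p, IsCMI C ν p → μ ≤ ν → ν ∈ S) ∧
  ∀ η p, IsCMI C η p → ∀ φ ψ : Setoid A,
    ((φ ∈ S ∧ PIP C φ η) ∨ φ = p) → ((ψ ∈ S ∧ PIP C ψ η) ∨ ψ = p) →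
      ∃ σ : Setoid A, ((σ ∈ S ∧ PIP C σ η) ∨ σ = p) ∧ σ.r = Bul p φ ψ

/-- Auxiliary: uniqueness of covers of completely meet irreducible elements. -/
theorem cover_unique {C : Set (Setoid A)} {η p q : Setoid A}
    (h1 : IsCMI C η p) (h2 : IsCMI C η q) : p = q :=
  le_antisymm (h1.2.2.2 q h2.2.1 h2.2.2.1) (h2.2.2.2 p h1.2.1 h1.2.2.1)

/-- Auxiliary: if `ν ∼ μ` and `μ` has cover `p`, then `ν` is CMI with cover `p`. -/
theorem pip_cmi {C : Set (Setoid A)}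
    (hP : ∀ φ ψ p q : Setoid A, IsCMI C φ p → IsCMI C ψ q →
      Projective C (φ, p) (ψ, q) → p = q)
    {ν μ p : Setoid A} (h : PIP C ν μ) (hμ : IsCMI C μ p) : IsCMI C ν p := by
  obtain ⟨p₁, q, hν, hμq, hproj⟩ := h
  have hq : q = p := cover_unique hμq hμ
  have := hP ν μ p₁ q hν hμq hproj
  rw [this, hq] at hν
  exact hν

/-- Auxiliary modularity lemma: if `μ₁, μ₂` are CMI with common cover `p`, `μ ∈ C`,
`μ₁ ≰ μ` and `μ₁ ⊓ μ₂ ≤ μ`, then `μ ⊓ μ₁ ≤ μ₂`. -/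
theorem meet_le {C : Set (Setoid A)}
    (hInf : ∀ S ⊆ C, sInf S ∈ C) (hSup : ∀ S ⊆ C, sSup S ∈ C)
    (hM : ∀ x ∈ C, ∀ y ∈ C, ∀ z ∈ C, x ≤ z → x ⊔ y ⊓ z = (x ⊔ y) ⊓ z)
    {μ μ₁ μ₂ p : Setoid A} (hμC : μ ∈ C)
    (h1 : IsCMI C μ₁ p) (h2 : IsCMI C μ₂ p)
    (hn : ¬ μ₁ ≤ μ) (hm : μ₁ ⊓ μ₂ ≤ μ) : μ ⊓ μ₁ ≤ μ₂ := by
  set γ := μ ⊓ μ₁ with hγ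
  have hγC : γ ∈ C := by
    have := hInf {μ, μ₁} (by
      intro x hx
      rcases hx with rfl | hx
      · exact hμC
      · simp only [Set.mem_singleton_iff] at hx; rw [hx]; exact h1.1)
    rwa [sInf_pair] at this
  by_contra hγ2
  have hjC : γ ⊔ μ₂ ∈ C := by
    have := hSup {γ, μ₂} (by
      intro x hx
      rcases hx with rfl | hx
      · exact hγC
      · simp only [Set.mem_singleton_iff] at hx; rw [hx]; exact h2.1)
    rwa [sSup_pair] at this
  have hlt : μ₂ < γ ⊔ μ₂ := by
    rcases lt_or_eq_of_le (le_sup_right : μ₂ ≤ γ ⊔ μ₂) with h | h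
    · exact h
    · exact absurd (sup_le_iff.mp h.ge).1 hγ2
  have hple : p ≤ γ ⊔ μ₂ := h2.2.2.2 _ hjC hlt
  have hjle : γ ⊔ μ₂ ≤ p :=
    sup_le (le_trans inf_le_right h1.2.2.1.le) h2.2.2.1.le
  have hjp : γ ⊔ μ₂ = p := le_antisymm hjle hple
  have hmod := hM γ hγC μ₂ h2.1 μ₁ h1.1 inf_le_right
  rw [hjp] at hmod
  have hpm : p ⊓ μ₁ = μ₁ := inf_eq_right.mpr h1.2.2.1.le
  rw [hpm] at hmod
  have h21 : μ₂ ⊓ μ₁ ≤ γ := le_inf (le_trans (inf_comm μ₂ μ₁).le hm) inf_le_right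
  have : γ = μ₁ := by rw [← hmod, sup_eq_left.mpr h21]
  exact hn (this ▸ (inf_le_left : μ ⊓ μ₁ ≤ μ))

/-- Lemma 17: if `S ∈ 𝒮` is finite and `μ ∈ Cm` satisfies `⋀S ≤ μ`, then `μ ∈ S`. -/
theorem stmt13 (one : A) (C : Set (Setoid A))
    (hInf : ∀ S ⊆ C, sInf S ∈ C) (hSup : ∀ S ⊆ C, sSup S ∈ C)
    (hDir : ∀ D ⊆ C, D.Nonempty → DirectedOn (· ≤ ·) D →
      ∀ x y : A, (sSup D).r x y ↔ ∃ s ∈ D, s.r x y)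
    (hM : ∀ x ∈ C, ∀ y ∈ C, ∀ z ∈ C, x ≤ z → x ⊔ y ⊓ z = (x ⊔ y) ⊓ z)
    (hO : ∀ α ∈ C, ∀ a b : A, α ⊔ theta C one a = α ⊔ theta C one b ↔ α.r a b)
    (hR : ∀ α ∈ C, ∀ β ∈ C, (∀ x : A, α.r one x ↔ β.r one x) → α = β)
    (hP : ∀ φ ψ p q : Setoid A, IsCMI C φ p → IsCMI C ψ q →
      Projective C (φ, p) (ψ, q) → p = q)
    (hD : ∀ α ∈ C, ∀ β ∈ C, ∀ η p, IsCMI C η p → α ⊓ β ≤ η →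
      ∃ μ₁ μ₂ : Setoid A, (μ₁ = ⊤ ∨ PIP C μ₁ η) ∧ (μ₂ = ⊤ ∨ PIP C μ₂ η) ∧
        α ≤ μ₁ ∧ β ≤ μ₂ ∧ μ₁ ⊓ μ₂ ≤ η)
    (S : Set (Setoid A)) (hfin : S.Finite) (hS : InCalS C S)
    (μ p : Setoid A) (hμ : IsCMI C μ p) (hle : sInf S ≤ μ) :
    μ ∈ S := by
  have hSC : ∀ x ∈ S, x ∈ C := fun x hx => (hS.1 x hx).choose_spec.1
  suffices H : ∀ T : Set (Setoid A), T.Finite →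
      T ⊆ S → ∀ μ p : Setoid A, IsCMI C μ p → sInf T ≤ μ → μ ∈ S from
    H S hfin subset_rfl μ p hμ hle
  intro T hT
  refine Set.Finite.induction_on (motive := fun T _ => T ⊆ S → ∀ μ p : Setoid A, IsCMI C μ p → sInf T ≤ μ → μ ∈ S) T hT ?_ ?_
  · intro _ μ p hμ hle
    rw [sInf_empty] at hle
    exact absurd ((top_le_iff.mp hle) ▸ hμ.2.2.1) not_top_lt
  · intro a T' haT' hT'fin IH hsub μ p hμ hle
    have hsubS' : T' ⊆ S := fun x hx => hsub (Set.mem_insert_of_mem _ hx)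
    have haS : a ∈ S := hsub (Set.mem_insert _ _)
    have haC : a ∈ C := hSC a haS
    have hβC : sInf T' ∈ C := hInf T' (fun x hx => hSC x (hsubS' hx))
    rw [sInf_insert] at hle
    obtain ⟨μ₁, μ₂, h1, h2, ha1, hb2, hmeet⟩ := hD a haC (sInf T') hβC μ p hμ hle
    rcases h2 with rfl | hPIP2
    · -- μ₂ = ⊤, so μ₁ ≤ μ, hence a ≤ μ
      have : μ₁ ≤ μ := by simpa using hmeet
      exact hS.2.1 a haS μ p hμ (le_trans ha1 this)
    rcases h1 with rfl | hPIP1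
    · -- μ₁ = ⊤, so μ₂ ≤ μ, hence sInf T' ≤ μ; apply IH
      have : μ₂ ≤ μ := by simpa using hmeet
      exact IH hsubS' μ p hμ (le_trans hb2 this)
    have h1cmi : IsCMI C μ₁ p := pip_cmi hP hPIP1 hμ
    have h2cmi : IsCMI C μ₂ p := pip_cmi hP hPIP2 hμ
    have hμ₁S : μ₁ ∈ S := hS.2.1 a haS μ₁ p h1cmi ha1
    have hμ₂S : μ₂ ∈ S := IH hsubS' μ₂ p h2cmi hb2
    by_cases hc1 : μ₁ ≤ μ
    · exact hS.2.1 μ₁ hμ₁S μ p hμ hc1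
    by_cases hc2 : μ₂ ≤ μ
    · exact hS.2.1 μ₂ hμ₂S μ p hμ hc2
    have hne : μ₁ ≠ μ₂ := by
      intro h
      exact hc1 (le_trans (le_inf (le_refl μ₁) h.le) hmeet)
    obtain ⟨σ, hσ, hσr⟩ :=
      hS.2.2 μ p hμ μ₁ μ₂ (Or.inl ⟨hμ₁S, hPIP1⟩) (Or.inl ⟨hμ₂S, hPIP2⟩)
    have hA : μ ⊓ μ₁ ≤ μ₂ := meet_le hInf hSup hM hμ.1 h1cmi h2cmi hc1 hmeet
    have hB : μ ⊓ μ₂ ≤ μ₁ :=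
      meet_le hInf hSup hM hμ.1 h2cmi h1cmi hc2 (inf_comm μ₂ μ₁ ▸ hmeet)
    have hμσ : μ ≤ σ := by
      rw [Setoid.le_def]
      intro x y hxy
      show σ.r x y
      rw [hσr]
      refine ⟨Setoid.le_def.mp hμ.2.2.1.le hxy, ?_, ?_⟩
      · intro h1xy
        exact Setoid.le_def.mp hA (show (μ ⊓ μ₁).r x y from ⟨hxy, h1xy⟩)
      · intro h2xy
        exact Setoid.le_def.mp hB (show (μ ⊓ μ₂).r x y from ⟨hxy, h2xy⟩)
    rcases hσ with ⟨hσS, hσPIP⟩ | rfl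
    · have hσcmi : IsCMI C σ p := pip_cmi hP hσPIP hμ
      have : μ = σ := by
        rcases lt_or_eq_of_le hμσ with h | h
        · exact absurd (hμ.2.2.2 σ hσcmi.1 h) hσcmi.2.2.1.not_ge
        · exact h
      rw [this]; exact hσS
    · -- σ = p : then μ₁ = μ₂, contradiction
      exfalso
      apply hne
      apply Setoid.ext
      intro x y
      constructor
      · intro h1xy
        have hpxy : σ.r x y := Setoid.le_def.mp h1cmi.2.2.1.le h1xy
        have : Bul σ μ₁ μ₂ x y := by rw [← hσr]; exact hpxy
        exact this.2.mp h1xy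
      · intro h2xy
        have hpxy : σ.r x y := Setoid.le_def.mp h2cmi.2.2.1.le h2xy
        have : Bul σ μ₁ μ₂ x y := by rw [← hσr]; exact hpxy
        exact this.2.mpr h2xy
end

section
/- Assume conditions (M), (O), (R), (P). Then: (1) the map M : C → 𝒮, M(α) := {μ ∈ Cm : α ≤ μ}, is well defined (its image is contained in 𝒮) and injective; (2) if moreover A is finite and condition (D) holds, then M is a bijection between C and 𝒮. (This is Theorem 18 of the paper, representing the congruences of a (finite) strongly Fregean algebra by the upward closed subsets of Cm whose traces on PIP classes are subgroups.) -/
variable {A : Type*}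

set_option maxHeartbeats 1000000

namespace SF

/-- Bundle of all standing hypotheses. -/
structure Ctx (one : A) (C : Set (Setoid A)) : Prop where
  hInf : ∀ S ⊆ C, sInf S ∈ C
  hSup : ∀ S ⊆ C, sSup S ∈ C
  hDir : ∀ D ⊆ C, D.Nonempty → DirectedOn (· ≤ ·) D →
    ∀ x y : A, (sSup D).r x y ↔ ∃ s ∈ D, s.r x y
  hM : ∀ x ∈ C, ∀ y ∈ C, ∀ z ∈ C, x ≤ z → x ⊔ y ⊓ z = (x ⊔ y) ⊓ z
  hO : ∀ α ∈ C, ∀ a b : A, α ⊔ theta C one a = α ⊔ theta C one b ↔ α.r a b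
  hR : ∀ α ∈ C, ∀ β ∈ C, (∀ x : A, α.r one x ↔ β.r one x) → α = β
  hP : ∀ φ ψ p q : Setoid A, IsCMI C φ p → IsCMI C ψ q →
    Projective C (φ, p) (ψ, q) → p = q

variable {one : A} {C : Set (Setoid A)}

lemma rle {a b : Setoid A} (h : a ≤ b) {x y : A} (hxy : a.r x y) : b.r x y :=
  Setoid.le_def.mp h hxy

lemma le_of_all {a b : Setoid A} (h : ∀ x y, a.r x y → b.r x y) : a ≤ b :=
  Setoid.le_def.mpr fun {x y} hxy => h x y hxy

lemma pairwit {a b : Setoid A} (h : ¬ a ≤ b) : ∃ x y, a.r x y ∧ ¬ b.r x y := by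
  by_contra hc
  push_neg at hc
  exact h (le_of_all hc)

lemma inf_rel {a b : Setoid A} {x y : A} : (a ⊓ b).r x y ↔ a.r x y ∧ b.r x y := Iff.rfl

lemma top_mem (ctx : Ctx one C) : (⊤ : Setoid A) ∈ C := by
  have := ctx.hInf ∅ (by simp)
  simpa using this

lemma inf_mem (ctx : Ctx one C) {a b : Setoid A} (ha : a ∈ C) (hb : b ∈ C) : a ⊓ b ∈ C := by
  have := ctx.hInf {a, b} (by
    intro x hx
    rcases hx with rfl | rfl <;> assumption)
  simpa [sInf_pair] using this

lemma sup_mem (ctx : Ctx one C) {a b : Setoid A} (ha : a ∈ C) (hb : b ∈ C) : a ⊔ b ∈ C := by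
  have := ctx.hSup {a, b} (by
    intro x hx
    rcases hx with rfl | rfl <;> assumption)
  simpa [sSup_pair] using this

lemma theta_mem (ctx : Ctx one C) (a b : A) : theta C a b ∈ C :=
  ctx.hInf _ (fun _ hs => hs.1)

lemma theta_rel (a b : A) : (theta C a b).r a b :=
  fun _ hs => hs.2

lemma theta_le {a b : A} {s : Setoid A} (hs : s ∈ C) (h : s.r a b) : theta C a b ≤ s :=
  sInf_le ⟨hs, h⟩

lemma cmi_unique {η p q : Setoid A} (h1 : IsCMI C η p) (h2 : IsCMI C η q) : p = q :=
  le_antisymm (h1.2.2.2 q h2.2.1 h2.2.2.1) (h2.2.2.2 p h1.2.1 h1.2.2.1)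

lemma cmi_eq_of_le {μ η p : Setoid A} (h1 : IsCMI C μ p) (h2 : IsCMI C η p) (hle : μ ≤ η) :
    μ = η := by
  by_contra hne
  exact absurd (lt_of_le_of_lt (h1.2.2.2 η h2.1 (lt_of_le_of_ne hle hne)) h2.2.2.1) (lt_irrefl p)

end SF

namespace SF

variable {one : A} {C : Set (Setoid A)}

/-- `[a,b]` is a prime (two-element) interval of `C`. -/
def GoodI (C : Set (Setoid A)) (a b : Setoid A) : Prop :=
  a ∈ C ∧ b ∈ C ∧ a < b ∧ ∀ γ ∈ C, a ≤ γ → γ ≤ b → γ = a ∨ γ = b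

lemma good_cmi {η p : Setoid A} (h : IsCMI C η p) : GoodI C η p := by
  refine ⟨h.1, h.2.1, h.2.2.1, fun γ hγ hηγ hγp => ?_⟩
  by_cases he : γ = η
  · exact Or.inl he
  · exact Or.inr (le_antisymm hγp (h.2.2.2 γ hγ (lt_of_le_of_ne hηγ (Ne.symm he))))

lemma transpose_up (ctx : Ctx one C) {a b c d : Setoid A} (hab : GoodI C a b)
    (hc : c ∈ C) (hd : d ∈ C) (h1 : a = b ⊓ c) (h2 : d = b ⊔ c) : GoodI C c d := by
  obtain ⟨haC, hbC, hlt, hdi⟩ := hab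
  have hac : a ≤ c := h1 ▸ inf_le_right
  have hcd : c ≤ d := h2 ▸ le_sup_right
  have hne : c ≠ d := by
    intro h
    have hbc : b ≤ c := by rw [h, h2]; exact le_sup_left
    have : a = b := by rw [h1]; exact inf_eq_left.mpr hbc
    exact hlt.ne this
  refine ⟨hc, hd, lt_of_le_of_ne hcd hne, fun γ hγ hcγ hγd => ?_⟩
  have h3 : a ≤ γ ⊓ b := le_inf (hac.trans hcγ) (h1 ▸ inf_le_left)
  rcases hdi (γ ⊓ b) (inf_mem ctx hγ hbC) h3 inf_le_right with hcase | hcase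
  · left
    have hmod := ctx.hM c hc b hbC γ hγ hcγ
    have : γ = (c ⊔ b) ⊓ γ := by
      rw [sup_comm c b, ← h2]
      exact (inf_eq_right.mpr hγd).symm
    rw [this, ← hmod, inf_comm b γ, hcase]
    exact (sup_eq_left.mpr hac).symm ▸ rfl
  · right
    have hbγ : b ≤ γ := inf_eq_right.mp hcase
    exact le_antisymm hγd (h2 ▸ sup_le hbγ hcγ)

lemma transpose_down (ctx : Ctx one C) {a b c d : Setoid A} (hcd : GoodI C c d)
    (ha : a ∈ C) (hb : b ∈ C) (h1 : a = b ⊓ c) (h2 : d = b ⊔ c) : GoodI C a b := by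
  obtain ⟨hcC, hdC, hlt, hdi⟩ := hcd
  have hab : a ≤ b := h1 ▸ inf_le_left
  have hbd : b ≤ d := h2 ▸ le_sup_left
  have hne : a ≠ b := by
    intro h
    have hbc : b ≤ c := by
      have : b = b ⊓ c := by rw [← h1, h]
      exact inf_eq_left.mp this.symm
    have : d = c := by rw [h2]; exact sup_eq_right.mpr hbc
    exact hlt.ne this.symm
  refine ⟨ha, hb, lt_of_le_of_ne hab hne, fun γ hγ haγ hγb => ?_⟩
  have h4 : γ ⊔ c ≤ d := sup_le (hγb.trans hbd) (h2 ▸ le_sup_right)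
  rcases hdi (γ ⊔ c) (sup_mem ctx hγ hcC) le_sup_right h4 with hcase | hcase
  · left
    have hγc : γ ≤ c := le_sup_left.trans hcase.le
    exact le_antisymm (h1 ▸ le_inf hγb hγc) haγ
  · right
    have hmod := ctx.hM γ hγ c hcC b hb hγb
    have hca : c ⊓ b = a := by rw [inf_comm, ← h1]
    have : γ ⊔ c ⊓ b = γ := by rw [hca]; exact sup_eq_left.mpr haγ
    rw [this] at hmod
    rw [hmod, hcase]
    exact inf_eq_right.mpr hbd

lemma zorn_cmi (ctx : Ctx one C) {base : Setoid A} {x y : A} (hb : base ∈ C)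
    (hxy : ¬ base.r x y) :
    ∃ η, base ≤ η ∧ ¬ η.r x y ∧ IsCMI C η (η ⊔ theta C x y) := by
  set s : Set (Setoid A) := {δ | δ ∈ C ∧ base ≤ δ ∧ ¬ δ.r x y} with hs
  have hzorn := zorn_le_nonempty₀ s ?_ base ⟨hb, le_rfl, hxy⟩
  · obtain ⟨m, hbm, hm⟩ := hzorn
    have hmC : m ∈ C := hm.prop.1
    have hmr : ¬ m.r x y := hm.prop.2.2
    have hjC : m ⊔ theta C x y ∈ C := sup_mem ctx hmC (theta_mem ctx x y)
    have hlt : m < m ⊔ theta C x y := by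
      refine lt_of_le_of_ne le_sup_left (fun h => ?_)
      have hθ : theta C x y ≤ m := by rw [h]; exact le_sup_right
      exact hmr (rle hθ (theta_rel x y))
    refine ⟨m, hbm, hmr, hmC, hjC, hlt, fun β hβ hmβ => ?_⟩
    have hβr : β.r x y := by
      by_contra hβr
      have hβs : β ∈ s := ⟨hβ, hbm.trans hmβ.le, hβr⟩
      exact hmβ.not_ge (hm.2 hβs hmβ.le)
    exact sup_le hmβ.le (theta_le hβ hβr)
  · intro c hcs hchain y₀ hy₀
    refine ⟨sSup c, ⟨ctx.hSup c (fun z hz => (hcs hz).1), ?_, ?_⟩, fun z hz => le_sSup hz⟩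
    · exact (hcs hy₀).2.1.trans (le_sSup hy₀)
    · intro hr
      rw [ctx.hDir c (fun z hz => (hcs hz).1) ⟨y₀, hy₀⟩ hchain.directedOn x y] at hr
      obtain ⟨z, hz, hrz⟩ := hr
      exact (hcs hz).2.2 hrz

lemma wit (ctx : Ctx one C) {γ δ : Setoid A} (hγ : γ ∈ C) (hδ : δ ∈ C) (hle : γ ≤ δ)
    (hne : γ ≠ δ) : ∃ u, δ.r one u ∧ ¬ γ.r one u := by
  by_contra h
  push_neg at h
  exact hne (ctx.hR γ hγ δ hδ (fun u => ⟨fun hh => rle hle hh, fun hh => h u hh⟩))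

/-- FACT 6: a completely meet irreducible congruence has "index 2" in its cover:
membership of pairs of the cover is governed by the 1-class. -/
lemma fact6 (ctx : Ctx one C) {η p : Setoid A} (h : IsCMI C η p) {x y : A} (hxy : p.r x y) :
    η.r x y ↔ (η.r one x ↔ η.r one y) := by
  obtain ⟨hηC, hpC, hlt, hcov⟩ := h
  constructor
  · intro hr
    exact ⟨fun h1x => η.iseqv.trans h1x hr, fun h1y => η.iseqv.trans h1y (η.iseqv.symm hr)⟩
  · intro hiff
    by_cases h1x : η.r one x
    · exact η.iseqv.trans (η.iseqv.symm h1x) (hiff.mp h1x)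
    · have h1y : ¬ η.r one y := fun h => h1x (hiff.mpr h)
      have key : ∀ u : A, ¬ η.r one u → η ⊔ theta C one u = η ⊔ (p ⊔ theta C one u) := by
        intro u hu
        have hlt' : η < η ⊔ theta C one u := by
          refine lt_of_le_of_ne le_sup_left (fun h => ?_)
          have hθ : theta C one u ≤ η := by rw [h]; exact le_sup_right
          exact hu (rle hθ (theta_rel one u))
        have hp : p ≤ η ⊔ theta C one u :=
          hcov _ (sup_mem ctx hηC (theta_mem ctx one u)) hlt'
        refine le_antisymm (sup_le le_sup_left (le_sup_right.trans le_sup_right)) ?_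
        exact sup_le le_sup_left (sup_le hp le_sup_right)
      have e2 : p ⊔ theta C one x = p ⊔ theta C one y := (ctx.hO p hpC x y).mpr hxy
      have e3 : η ⊔ theta C one x = η ⊔ theta C one y := by
        rw [key x h1x, key y h1y, e2]
      exact (ctx.hO η hηC x y).mp e3

end SF

namespace SF

variable {one : A} {C : Set (Setoid A)}

lemma sup_cmi (ctx : Ctx one C) {η₁ η₂ p : Setoid A} (h1 : IsCMI C η₁ p) (h2 : IsCMI C η₂ p)
    (hne : η₁ ≠ η₂) : η₁ ⊔ η₂ = p := by
  have hle : η₁ ⊔ η₂ ≤ p := sup_le h1.2.2.1.le h2.2.2.1.le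
  have hlt : η₁ < η₁ ⊔ η₂ := by
    refine lt_of_le_of_ne le_sup_left (fun h => ?_)
    exact hne (cmi_eq_of_le h2 h1 (le_sup_right.trans h.ge)).symm
  exact le_antisymm hle (h1.2.2.2 _ (sup_mem ctx h1.1 h2.1) hlt)

lemma good_meet (ctx : Ctx one C) {η₁ η₂ p : Setoid A} (h1 : IsCMI C η₁ p) (h2 : IsCMI C η₂ p)
    (hne : η₁ ≠ η₂) : GoodI C (η₁ ⊓ η₂) η₁ :=
  transpose_down ctx (good_cmi h2) (inf_mem ctx h1.1 h2.1) h1.1 rfl (sup_cmi ctx h1 h2 hne).symm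

/-- `γ` is a "third element" of the height-two interval `[η₁ ⊓ η₂, p]`. -/
def MidI (C : Set (Setoid A)) (p η₁ η₂ γ : Setoid A) : Prop :=
  γ ∈ C ∧ η₁ ⊓ η₂ ≤ γ ∧ γ ≤ p ∧ γ ≠ η₁ ⊓ η₂ ∧ γ ≠ η₁ ∧ γ ≠ η₂ ∧ γ ≠ p

lemma midi_comm {p η₁ η₂ γ : Setoid A} (h : MidI C p η₁ η₂ γ) : MidI C p η₂ η₁ γ := by
  obtain ⟨a, b, c, d, e, f, g⟩ := h
  exact ⟨a, by rwa [inf_comm], c, by rwa [inf_comm], f, e, g⟩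

lemma mid_meet (ctx : Ctx one C) {η₁ η₂ p γ : Setoid A} (h1 : IsCMI C η₁ p) (h2 : IsCMI C η₂ p)
    (hne : η₁ ≠ η₂) (hmid : MidI C p η₁ η₂ γ) : γ ⊓ η₁ = η₁ ⊓ η₂ := by
  obtain ⟨hγC, hml, hlp, hnm, hn1, hn2, hnp⟩ := hmid
  have hgm := good_meet ctx h1 h2 hne
  rcases hgm.2.2.2 (γ ⊓ η₁) (inf_mem ctx hγC h1.1) (le_inf hml inf_le_left) inf_le_right with
    h | h
  · exact h
  · exfalso
    have hle : η₁ ≤ γ := inf_eq_right.mp h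
    rcases (good_cmi h1).2.2.2 γ hγC hle hlp with h' | h'
    · exact hn1 h'
    · exact hnp h'

lemma mid_sup (ctx : Ctx one C) {η₁ η₂ p γ : Setoid A} (h1 : IsCMI C η₁ p) (h2 : IsCMI C η₂ p)
    (hne : η₁ ≠ η₂) (hmid : MidI C p η₁ η₂ γ) : γ ⊔ η₁ = p := by
  have hle : γ ⊔ η₁ ≤ p := sup_le hmid.2.2.1 h1.2.2.1.le
  have hlt : η₁ < η₁ ⊔ γ := by
    refine lt_of_le_of_ne le_sup_left (fun h => ?_)
    have hγ1 : γ ≤ η₁ := le_sup_right.trans h.ge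
    exact hmid.2.2.2.1 ((inf_eq_left.mpr hγ1).symm.trans (mid_meet ctx h1 h2 hne hmid))
  have := h1.2.2.2 _ (sup_mem ctx h1.1 hmid.1) hlt
  rw [sup_comm] at this
  exact le_antisymm hle this

lemma mid_good (ctx : Ctx one C) {η₁ η₂ p γ : Setoid A} (h1 : IsCMI C η₁ p) (h2 : IsCMI C η₂ p)
    (hne : η₁ ≠ η₂) (hmid : MidI C p η₁ η₂ γ) : GoodI C γ p := by
  refine transpose_up ctx (good_meet ctx h1 h2 hne) hmid.1 h1.2.1 ?_ ?_
  · rw [inf_comm η₁ γ]; exact (mid_meet ctx h1 h2 hne hmid).symm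
  · rw [sup_comm η₁ γ]; exact (mid_sup ctx h1 h2 hne hmid).symm

lemma mid_proj (ctx : Ctx one C) {η₁ η₂ p γ : Setoid A} (h1 : IsCMI C η₁ p) (h2 : IsCMI C η₂ p)
    (hne : η₁ ≠ η₂) (hmid : MidI C p η₁ η₂ γ) : Projective C (γ, p) (η₁, p) := by
  have hmC : η₁ ⊓ η₂ ∈ C := inf_mem ctx h1.1 h2.1
  have s1 : Persp C (γ, p) (η₁ ⊓ η₂, η₂) := by
    refine ⟨hmid.1, h1.2.1, hmC, h2.1, Or.inr ⟨?_, ?_⟩⟩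
    · have h := mid_meet ctx h2 h1 (Ne.symm hne) (midi_comm hmid)
      rw [inf_comm η₂ η₁] at h
      rw [← h, inf_comm]
    · have h := mid_sup ctx h2 h1 (Ne.symm hne) (midi_comm hmid)
      rw [← h, sup_comm]
  have s2 : Persp C (η₁ ⊓ η₂, η₂) (η₁, p) := by
    refine ⟨hmC, h2.1, h1.1, h1.2.1, Or.inl ⟨?_, ?_⟩⟩
    · rw [inf_comm]
    · rw [sup_comm]; exact (sup_cmi ctx h1 h2 hne).symm
  exact Relation.ReflTransGen.tail (Relation.ReflTransGen.single s1) s2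

/-- L5: any third element of `[η₁ ⊓ η₂, p]` is completely meet irreducible with cover `p`. -/
lemma mid_cmi (ctx : Ctx one C) {η₁ η₂ p γ : Setoid A} (h1 : IsCMI C η₁ p) (h2 : IsCMI C η₂ p)
    (hne : η₁ ≠ η₂) (hmid : MidI C p η₁ η₂ γ) : IsCMI C γ p := by
  have hgood := mid_good ctx h1 h2 hne hmid
  refine ⟨hmid.1, h1.2.1, hgood.2.2.1, fun γ' hγ' hlt => ?_⟩
  by_contra hnp
  have hγ'p : γ' ⊓ p = γ := by
    rcases hgood.2.2.2 (γ' ⊓ p) (inf_mem ctx hγ' h1.2.1) (le_inf hlt.le hmid.2.2.1)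
      inf_le_right with h | h
    · exact h
    · exact absurd (inf_le_left.trans_eq' h) hnp
  obtain ⟨w, hpw, hγw⟩ := wit ctx hmid.1 h1.2.1 hmid.2.2.1 hmid.2.2.2.2.2.2
  have hγ'w : ¬ γ'.r one w := fun h => hγw (by rw [← hγ'p]; exact ⟨h, hpw⟩)
  obtain ⟨η'', hγ'η, hη''w, hcmi⟩ := zorn_cmi ctx hγ' hγ'w
  set q'' := η'' ⊔ theta C one w with hq''
  have hη''p : η'' ⊓ p = γ := by
    rcases hgood.2.2.2 (η'' ⊓ p) (inf_mem ctx hcmi.1 h1.2.1)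
      (le_inf (hlt.le.trans hγ'η) hmid.2.2.1) inf_le_right with h | h
    · exact h
    · exfalso
      exact hη''w (rle (inf_eq_right.mp h) hpw)
  have hθp : theta C one w ≤ p := theta_le h1.2.1 hpw
  have hgθ : γ ⊔ theta C one w = p := by
    rcases hgood.2.2.2 (γ ⊔ theta C one w) (sup_mem ctx hmid.1 (theta_mem ctx one w))
      le_sup_left (sup_le hmid.2.2.1 hθp) with h | h
    · exact absurd (rle (le_sup_right.trans h.le) (theta_rel one w)) hγw
    · exact h
  have hγη'' : γ ≤ η'' := (hlt.le.trans hγ'η)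
  have hqp : q'' = η'' ⊔ p := by
    rw [hq'', ← hgθ, ← sup_assoc, sup_eq_left.mpr hγη'']
  have hpersp : Persp C (η'', q'') (γ, p) := by
    refine ⟨hcmi.1, hcmi.2.1, hmid.1, h1.2.1, Or.inr ⟨?_, ?_⟩⟩
    · rw [inf_comm, ← hη''p]
    · rw [hqp, sup_comm]
  have hproj : Projective C (η'', q'') (η₁, p) :=
    Relation.ReflTransGen.trans (Relation.ReflTransGen.single hpersp)
      (mid_proj ctx h1 h2 hne hmid)
  have := ctx.hP η'' η₁ q'' p hcmi h1 hproj
  -- q'' = p, hence η'' < p, hence γ' ≤ p, so γ' = γ' ⊓ p = γ, contradiction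
  have hγ'le : γ' ≤ p := hγ'η.trans (this ▸ hcmi.2.2.1.le)
  exact hlt.ne ((inf_eq_left.mpr hγ'le).symm.trans hγ'p).symm

/-- The V-lemma: two distinct CMI's with cover `p` cut by a common prime interval below `p`
admit a third element over their meet. -/
lemma vlemma (ctx : Ctx one C) {η η' p a b : Setoid A} (h1 : IsCMI C η p) (h2 : IsCMI C η' p)
    (hne : η ≠ η') (hab : GoodI C a b) (hbp : b ≤ p) (haη : a ≤ η) (haη' : a ≤ η')
    (hbη : ¬ b ≤ η) (hbη' : ¬ b ≤ η') : ∃ γ, MidI C p η η' γ := by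
  have hmC : η ⊓ η' ∈ C := inf_mem ctx h1.1 h2.1
  have hγC : (η ⊓ η') ⊔ b ∈ C := sup_mem ctx hmC hab.2.1
  have ham : a ≤ η ⊓ η' := le_inf haη haη'
  have hbmeet : ∀ {ζ : Setoid A}, ζ ∈ C → ¬ b ≤ ζ → a ≤ ζ → b ⊓ ζ = a := by
    intro ζ hζC hbζ haζ
    rcases hab.2.2.2 (b ⊓ ζ) (inf_mem ctx hab.2.1 hζC) (le_inf hab.2.2.1.le haζ)
      inf_le_left with hh | hh
    · exact hh
    · exact absurd (inf_eq_left.mp hh) hbζ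
  have hγη : ((η ⊓ η') ⊔ b) ⊓ η = η ⊓ η' := by
    have hmod := ctx.hM (η ⊓ η') hmC b hab.2.1 η h1.1 inf_le_left
    rw [← hmod, hbmeet h1.1 hbη haη]
    exact sup_eq_left.mpr ham
  have hγη' : ((η ⊓ η') ⊔ b) ⊓ η' = η ⊓ η' := by
    have hmod := ctx.hM (η ⊓ η') hmC b hab.2.1 η' h2.1 inf_le_right
    rw [← hmod, hbmeet h2.1 hbη' haη']
    exact sup_eq_left.mpr ham
  have hne' : η ⊓ η' ≠ η := fun h => hne (cmi_eq_of_le h1 h2 (inf_eq_left.mp h))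
  have hne'' : η ⊓ η' ≠ η' := fun h => hne (cmi_eq_of_le h2 h1 (inf_eq_right.mp h)).symm
  refine ⟨(η ⊓ η') ⊔ b, hγC, le_sup_left, sup_le (inf_le_left.trans h1.2.2.1.le) hbp,
    ?_, ?_, ?_, ?_⟩
  · intro h
    exact hbη ((le_sup_right.trans h.le).trans inf_le_left)
  · intro h
    rw [h, inf_idem] at hγη
    exact hne' hγη.symm
  · intro h
    rw [h, inf_idem] at hγη'
    exact hne'' hγη'.symm
  · intro h
    rw [h, inf_eq_right.mpr h1.2.2.1.le] at hγη
    exact hne' hγη.symm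

end SF

namespace SF

variable {one : A} {C : Set (Setoid A)}

lemma mid_E1 (ctx : Ctx one C) {η₁ η₂ p γ : Setoid A} (h1 : IsCMI C η₁ p) (h2 : IsCMI C η₂ p)
    (hne : η₁ ≠ η₂) (hmid : MidI C p η₁ η₂ γ) :
    ∀ u, γ.r one u → (η₁.r one u ↔ η₂.r one u) := by
  intro u hu
  constructor
  · intro h1u
    have hmm : (γ ⊓ η₁).r one u := ⟨hu, h1u⟩
    have : (η₁ ⊓ η₂).r one u := by
      rw [← mid_meet ctx h1 h2 hne hmid]; exact hmm
    exact this.2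
  · intro h2u
    have hmm : (γ ⊓ η₂).r one u := ⟨hu, h2u⟩
    have : (η₂ ⊓ η₁).r one u := by
      rw [← mid_meet ctx h2 h1 (Ne.symm hne) (midi_comm hmid)]; exact hmm
    exact this.2

lemma mid_E2 (ctx : Ctx one C) {η₁ η₂ p γ : Setoid A} (h1 : IsCMI C η₁ p) (h2 : IsCMI C η₂ p)
    (hne : η₁ ≠ η₂) (hmid : MidI C p η₁ η₂ γ) :
    ∀ u, p.r one u → ¬ η₁.r one u → ¬ η₂.r one u → γ.r one u := by
  obtain ⟨z, hz, hznm⟩ := wit ctx (inf_mem ctx h1.1 h2.1) hmid.1 hmid.2.1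
    (Ne.symm hmid.2.2.2.1)
  have hz1 : ¬ η₁.r one z := by
    intro h
    exact hznm ⟨h, (mid_E1 ctx h1 h2 hne hmid z hz).mp h⟩
  have hz2 : ¬ η₂.r one z := fun h => hz1 ((mid_E1 ctx h1 h2 hne hmid z hz).mpr h)
  intro u hpu h1u h2u
  have hpz : p.r one z := rle hmid.2.2.1 hz
  have hpzu : p.r z u := p.iseqv.trans (p.iseqv.symm hpz) hpu
  have hη₁zu : η₁.r z u := (fact6 ctx h1 hpzu).mpr (iff_of_false hz1 h1u)
  have hη₂zu : η₂.r z u := (fact6 ctx h2 hpzu).mpr (iff_of_false hz2 h2u)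
  exact γ.iseqv.trans hz (rle hmid.2.1 ⟨hη₁zu, hη₂zu⟩)

lemma mid_Echar (ctx : Ctx one C) {η₁ η₂ p γ : Setoid A} (h1 : IsCMI C η₁ p)
    (h2 : IsCMI C η₂ p) (hne : η₁ ≠ η₂) (hmid : MidI C p η₁ η₂ γ) :
    ∀ u, γ.r one u ↔ (p.r one u ∧ (η₁.r one u ↔ η₂.r one u)) := by
  intro u
  constructor
  · intro h
    exact ⟨rle hmid.2.2.1 h, mid_E1 ctx h1 h2 hne hmid u h⟩
  · rintro ⟨hpu, hiff⟩
    by_cases h1u : η₁.r one u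
    · exact rle hmid.2.1 ⟨h1u, hiff.mp h1u⟩
    · exact mid_E2 ctx h1 h2 hne hmid u hpu h1u (fun h2u => h1u (hiff.mpr h2u))

lemma mid_rel (ctx : Ctx one C) {η₁ η₂ p γ : Setoid A} (h1 : IsCMI C η₁ p)
    (h2 : IsCMI C η₂ p) (hne : η₁ ≠ η₂) (hmid : MidI C p η₁ η₂ γ) :
    ∀ x y, γ.r x y ↔ Bul p η₁ η₂ x y := by
  have hγcmi := mid_cmi ctx h1 h2 hne hmid
  intro x y
  constructor
  · intro h
    have hp : p.r x y := rle hmid.2.2.1 h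
    refine ⟨hp, ?_⟩
    rw [fact6 ctx h1 hp, fact6 ctx h2 hp]
    have hg := (fact6 ctx hγcmi hp).mp h
    rw [mid_Echar ctx h1 h2 hne hmid x, mid_Echar ctx h1 h2 hne hmid y] at hg
    by_cases hx : p.r one x
    · have hy : p.r one y := p.iseqv.trans hx hp
      simp only [hx, hy, true_and] at hg
      tauto
    · have hy : ¬ p.r one y := fun h' => hx (p.iseqv.trans h' (p.iseqv.symm hp))
      have e1x : ¬ η₁.r one x := fun h' => hx (rle h1.2.2.1.le h')
      have e1y : ¬ η₁.r one y := fun h' => hy (rle h1.2.2.1.le h')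
      have e2x : ¬ η₂.r one x := fun h' => hx (rle h2.2.2.1.le h')
      have e2y : ¬ η₂.r one y := fun h' => hy (rle h2.2.2.1.le h')
      tauto
  · rintro ⟨hp, hiff⟩
    rw [fact6 ctx h1 hp, fact6 ctx h2 hp] at hiff
    rw [fact6 ctx hγcmi hp, mid_Echar ctx h1 h2 hne hmid x,
      mid_Echar ctx h1 h2 hne hmid y]
    by_cases hx : p.r one x
    · have hy : p.r one y := p.iseqv.trans hx hp
      simp only [hx, hy, true_and]
      tauto
    · have hy : ¬ p.r one y := fun h' => hx (p.iseqv.trans h' (p.iseqv.symm hp))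
      simp only [hx, hy, false_and]

lemma mid_rel_eq (ctx : Ctx one C) {η₁ η₂ p γ : Setoid A} (h1 : IsCMI C η₁ p)
    (h2 : IsCMI C η₂ p) (hne : η₁ ≠ η₂) (hmid : MidI C p η₁ η₂ γ) :
    γ.r = Bul p η₁ η₂ :=
  funext fun x => funext fun y => propext (mid_rel ctx h1 h2 hne hmid x y)

lemma mid_unique (ctx : Ctx one C) {η₁ η₂ p γ γ' : Setoid A} (h1 : IsCMI C η₁ p)
    (h2 : IsCMI C η₂ p) (hne : η₁ ≠ η₂) (hm : MidI C p η₁ η₂ γ)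
    (hm' : MidI C p η₁ η₂ γ') : γ = γ' :=
  ctx.hR γ hm.1 γ' hm'.1 (fun u => by
    rw [mid_Echar ctx h1 h2 hne hm u, mid_Echar ctx h1 h2 hne hm' u])

lemma exists_00 (ctx : Ctx one C) {μ₁ μ₂ p : Setoid A} (h1 : IsCMI C μ₁ p)
    (h2 : IsCMI C μ₂ p) :
    ∃ x y, p.r x y ∧ ¬ μ₁.r x y ∧ ¬ μ₂.r x y := by
  obtain ⟨w₁, hpw₁, h1w₁⟩ := wit ctx h1.1 h1.2.1 h1.2.2.1.le h1.2.2.1.ne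
  by_cases h2w₁ : μ₂.r one w₁
  · obtain ⟨w₂, hpw₂, h2w₂⟩ := wit ctx h2.1 h2.2.1 h2.2.2.1.le h2.2.2.1.ne
    by_cases h1w₂ : μ₁.r one w₂
    · have hp12 : p.r w₁ w₂ := p.iseqv.trans (p.iseqv.symm hpw₁) hpw₂
      refine ⟨w₁, w₂, hp12, ?_, ?_⟩
      · intro h
        exact h1w₁ (((fact6 ctx h1 hp12).mp h).mpr h1w₂)
      · intro h
        exact h2w₂ (((fact6 ctx h2 hp12).mp h).mp h2w₁)
    · exact ⟨one, w₂, hpw₂, h1w₂, h2w₂⟩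
  · exact ⟨one, w₁, hpw₁, h1w₁, h2w₁⟩

lemma midi_of_bul (ctx : Ctx one C) {μ₁ μ₂ p : Setoid A} (h1 : IsCMI C μ₁ p)
    (h2 : IsCMI C μ₂ p) (hne : μ₁ ≠ μ₂) {σ : Setoid A} (hσC : σ ∈ C)
    (hrel : ∀ x y, σ.r x y ↔ Bul p μ₁ μ₂ x y) : MidI C p μ₁ μ₂ σ := by
  have hn12 : ¬ μ₁ ≤ μ₂ := fun h => hne (cmi_eq_of_le h1 h2 h)
  have hn21 : ¬ μ₂ ≤ μ₁ := fun h => hne (cmi_eq_of_le h2 h1 h).symm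
  obtain ⟨x₁, y₁, h11, h12⟩ := pairwit hn12
  obtain ⟨x₂, y₂, h21, h22⟩ := pairwit hn21
  obtain ⟨x₀, y₀, hp0, h01, h02⟩ := exists_00 ctx h1 h2
  refine ⟨hσC, ?_, ?_, ?_, ?_, ?_, ?_⟩
  · exact le_of_all fun x y h =>
      (hrel x y).mpr ⟨rle h1.2.2.1.le h.1, iff_of_true h.1 h.2⟩
  · exact le_of_all fun x y h => ((hrel x y).mp h).1
  · intro h
    have hs : σ.r x₀ y₀ := (hrel _ _).mpr ⟨hp0, iff_of_false h01 h02⟩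
    rw [h] at hs
    exact h01 hs.1
  · intro h
    have hs : σ.r x₁ y₁ := h ▸ h11
    exact h12 (((hrel _ _).mp hs).2.mp h11)
  · intro h
    have hs : σ.r x₂ y₂ := h ▸ h21
    exact h22 (((hrel _ _).mp hs).2.mpr h21)
  · intro h
    have hp : p.r x₂ y₂ := rle h2.2.2.1.le h21
    have hs : σ.r x₂ y₂ := h ▸ hp
    exact h22 (((hrel _ _).mp hs).2.mpr h21)

lemma persp_symm : Symmetric (Persp C) := by
  rintro pq rs ⟨a, b, c, d, h⟩
  exact ⟨c, d, a, b, h.symm⟩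

lemma proj_symm {I J : Setoid A × Setoid A} (h : Projective C I J) : Projective C J I :=
  @Std.Symm.symm _ _ (@Relation.ReflTransGen.stdSymm _ (Persp C) ⟨fun a b h => persp_symm h⟩) _ _ h

lemma pip_cov (ctx : Ctx one C) {η p μ : Setoid A} (hη : IsCMI C η p) (h : PIP C μ η) :
    IsCMI C μ p ∧ Projective C (μ, p) (η, p) := by
  obtain ⟨p', q', hμ, hη', hproj⟩ := h
  have e1 : q' = p := cmi_unique hη' hη
  have e2 : p' = q' := ctx.hP μ η p' q' hμ hη' hproj
  exact ⟨by rwa [e2, e1] at hμ, by rwa [e2, e1] at hproj⟩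

end SF

namespace SF

variable {one : A} {C : Set (Setoid A)}

lemma caseB (ctx : Ctx one C) {η₁ η₂ η₃ p τ₁₂ τ₂₃ : Setoid A}
    (h1 : IsCMI C η₁ p) (h2 : IsCMI C η₂ p) (h3 : IsCMI C η₃ p)
    (hne12 : η₁ ≠ η₂) (hne23 : η₂ ≠ η₃) (hne13 : η₁ ≠ η₃)
    (m12 : MidI C p η₁ η₂ τ₁₂) (m23 : MidI C p η₂ η₃ τ₂₃)
    (hI : τ₁₂ ⊓ τ₂₃ ≤ η₁) : ∃ γ, MidI C p η₁ η₃ γ := by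
  classical
  have t12cmi := mid_cmi ctx h1 h2 hne12 m12
  have t23cmi := mid_cmi ctx h2 h3 hne23 m23
  have tau12 : ∀ x y, p.r x y → ¬ η₁.r x y → ¬ η₂.r x y → τ₁₂.r x y := by
    intro x y hp hn1 hn2
    rw [fact6 ctx t12cmi hp]
    by_cases hx : p.r one x
    · have hy : p.r one y := p.iseqv.trans hx hp
      rw [mid_Echar ctx h1 h2 hne12 m12 x, mid_Echar ctx h1 h2 hne12 m12 y]
      simp only [hx, hy, true_and]
      rw [fact6 ctx h1 hp] at hn1
      rw [fact6 ctx h2 hp] at hn2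
      tauto
    · have hy : ¬ p.r one y := fun h' => hx (p.iseqv.trans h' (p.iseqv.symm hp))
      exact absurd ((fact6 ctx h1 hp).mpr
        (iff_of_false (fun h => hx (rle h1.2.2.1.le h)) (fun h => hy (rle h1.2.2.1.le h)))) hn1
  have tau23 : ∀ x y, p.r x y → ¬ η₂.r x y → ¬ η₃.r x y → τ₂₃.r x y := by
    intro x y hp hn2 hn3
    rw [fact6 ctx t23cmi hp]
    by_cases hx : p.r one x
    · have hy : p.r one y := p.iseqv.trans hx hp
      rw [mid_Echar ctx h2 h3 hne23 m23 x, mid_Echar ctx h2 h3 hne23 m23 y]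
      simp only [hx, hy, true_and]
      rw [fact6 ctx h2 hp] at hn2
      rw [fact6 ctx h3 hp] at hn3
      tauto
    · have hy : ¬ p.r one y := fun h' => hx (p.iseqv.trans h' (p.iseqv.symm hp))
      exact absurd ((fact6 ctx h2 hp).mpr
        (iff_of_false (fun h => hx (rle h2.2.2.1.le h)) (fun h => hy (rle h2.2.2.1.le h)))) hn2
  have no111 : ∀ x y, p.r x y → ¬ η₁.r x y → ¬ η₂.r x y → ¬ η₃.r x y → False := by
    intro x y hp hn1 hn2 hn3
    exact hn1 (rle hI ⟨tau12 x y hp hn1 hn2, tau23 x y hp hn2 hn3⟩)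
  -- witness u12 with pattern (¬η₁, ¬η₂, η₃)
  obtain ⟨u12, hu12t, hu12m⟩ := wit ctx (inf_mem ctx h1.1 h2.1) m12.1 m12.2.1
    (Ne.symm m12.2.2.2.1)
  have hpu12 : p.r one u12 := rle m12.2.2.1 hu12t
  have h1u12 : ¬ η₁.r one u12 := fun h =>
    hu12m ⟨h, (mid_E1 ctx h1 h2 hne12 m12 u12 hu12t).mp h⟩
  have h2u12 : ¬ η₂.r one u12 := fun h =>
    h1u12 ((mid_E1 ctx h1 h2 hne12 m12 u12 hu12t).mpr h)
  have h3u12 : η₃.r one u12 := by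
    by_contra h3'
    exact no111 one u12 hpu12 h1u12 h2u12 h3'
  -- witness u23 with pattern (η₁, ¬η₂, ¬η₃)
  obtain ⟨u23, hu23t, hu23m⟩ := wit ctx (inf_mem ctx h2.1 h3.1) m23.1 m23.2.1
    (Ne.symm m23.2.2.2.1)
  have hpu23 : p.r one u23 := rle m23.2.2.1 hu23t
  have h2u23 : ¬ η₂.r one u23 := fun h =>
    hu23m ⟨h, (mid_E1 ctx h2 h3 hne23 m23 u23 hu23t).mp h⟩
  have h3u23 : ¬ η₃.r one u23 := fun h =>
    h2u23 ((mid_E1 ctx h2 h3 hne23 m23 u23 hu23t).mpr h)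
  have h1u23 : η₁.r one u23 := by
    by_contra h1'
    exact no111 one u23 hpu23 h1' h2u23 h3u23
  by_cases h010 : ∃ u, η₁.r one u ∧ ¬ η₂.r one u ∧ η₃.r one u
  · -- impossible configuration: (R) is violated by η₂ ⊓ τ₂₃ and η₂
    exfalso
    obtain ⟨v0, hv1, hv2, hv3⟩ := h010
    have hpv0 : p.r one v0 := rle h1.2.2.1.le hv1
    have hcls : ∀ v, (η₂ ⊓ τ₂₃).r one v ↔ η₂.r one v := by
      intro v
      constructor
      · exact fun h => h.1
      · intro hE2v
        refine ⟨hE2v, ?_⟩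
        have hpv : p.r one v := rle h2.2.2.1.le hE2v
        rw [mid_Echar ctx h2 h3 hne23 m23 v]
        refine ⟨hpv, iff_of_true hE2v ?_⟩
        by_contra hE3v
        by_cases hE1v : η₁.r one v
        · have hpvu : p.r v u12 := p.iseqv.trans (p.iseqv.symm hpv) hpu12
          refine no111 v u12 hpvu ?_ ?_ ?_
          · intro h; exact h1u12 (((fact6 ctx h1 hpvu).mp h).mp hE1v)
          · intro h; exact h2u12 (((fact6 ctx h2 hpvu).mp h).mp hE2v)
          · intro h; exact hE3v (((fact6 ctx h3 hpvu).mp h).mpr h3u12)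
        · have hpvv : p.r v v0 := p.iseqv.trans (p.iseqv.symm hpv) hpv0
          refine no111 v v0 hpvv ?_ ?_ ?_
          · intro h; exact hE1v (((fact6 ctx h1 hpvv).mp h).mpr hv1)
          · intro h; exact hv2 (((fact6 ctx h2 hpvv).mp h).mp hE2v)
          · intro h; exact hE3v (((fact6 ctx h3 hpvv).mp h).mpr hv3)
    have heq : η₂ ⊓ τ₂₃ = η₂ :=
      ctx.hR _ (inf_mem ctx h2.1 t23cmi.1) _ h2.1 hcls
    have hp00 : p.r v0 u23 := p.iseqv.trans (p.iseqv.symm hpv0) hpu23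
    have hη00 : η₂.r v0 u23 := (fact6 ctx h2 hp00).mpr (iff_of_false hv2 h2u23)
    have hm00 : (η₂ ⊓ τ₂₃).r v0 u23 := by rw [heq]; exact hη00
    have hτ00 : ¬ τ₂₃.r v0 u23 := by
      intro h
      have hiff := (fact6 ctx t23cmi hp00).mp h
      rw [mid_Echar ctx h2 h3 hne23 m23 v0, mid_Echar ctx h2 h3 hne23 m23 u23] at hiff
      exact hv2 ((hiff.mpr ⟨hpu23, iff_of_false h2u23 h3u23⟩).2.mpr hv3)
    exact hτ00 hm00.2
  · -- then η₂ itself is a third element over η₁ ⊓ η₃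
    push_neg at h010
    have hkey : ∀ u v, p.r one u → p.r one v → (η₁.r one u ↔ η₁.r one v) →
        (η₃.r one u ↔ η₃.r one v) → ¬ η₂.r one u → η₂.r one v → False := by
      intro u v hpu hpv ha1 ha3 hn2u h2v
      by_cases hau : η₁.r one u <;> by_cases hbu : η₃.r one u
      · exact h010 u hau hn2u hbu
      · have hpvu : p.r v u12 := p.iseqv.trans (p.iseqv.symm hpv) hpu12
        refine no111 v u12 hpvu ?_ ?_ ?_
        · intro h; exact h1u12 (((fact6 ctx h1 hpvu).mp h).mp (ha1.mp hau))
        · intro h; exact h2u12 (((fact6 ctx h2 hpvu).mp h).mp h2v)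
        · intro h; exact hbu (ha3.mpr (((fact6 ctx h3 hpvu).mp h).mpr h3u12))
      · have hpvu : p.r v u23 := p.iseqv.trans (p.iseqv.symm hpv) hpu23
        refine no111 v u23 hpvu ?_ ?_ ?_
        · intro h; exact hau (ha1.mpr (((fact6 ctx h1 hpvu).mp h).mpr h1u23))
        · intro h; exact h2u23 (((fact6 ctx h2 hpvu).mp h).mp h2v)
        · intro h; exact h3u23 (((fact6 ctx h3 hpvu).mp h).mp (ha3.mp hbu))
      · exact no111 one u hpu (fun h => hau h) (fun h => hn2u h) (fun h => hbu h)
    refine ⟨η₂, h2.1, ?_, h2.2.2.1.le, ?_, Ne.symm hne12, hne23, h2.2.2.1.ne⟩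
    · refine le_of_all fun x y h => ?_
      have h1xy : η₁.r x y := h.1
      have h3xy : η₃.r x y := h.2
      have hp : p.r x y := rle h1.2.2.1.le h1xy
      rw [fact6 ctx h2 hp]
      by_cases hx : p.r one x
      · have hy : p.r one y := p.iseqv.trans hx hp
        have a1 := (fact6 ctx h1 hp).mp h1xy
        have a3 := (fact6 ctx h3 hp).mp h3xy
        by_contra hdis
        by_cases h2x : η₂.r one x
        · have h2y : ¬ η₂.r one y := fun h' => hdis (iff_of_true h2x h')
          exact hkey y x hy hx a1.symm a3.symm h2y h2x
        · have h2y : η₂.r one y := by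
            by_contra h2y
            exact hdis (iff_of_false h2x h2y)
          exact hkey x y hx hy a1 a3 h2x h2y
      · have hy : ¬ p.r one y := fun h' => hx (p.iseqv.trans h' (p.iseqv.symm hp))
        exact iff_of_false (fun h' => hx (rle h2.2.2.1.le h'))
          (fun h' => hy (rle h2.2.2.1.le h'))
    · intro h
      have hle : η₂ ≤ η₁ := h.le.trans inf_le_left
      exact h1.2.2.1.not_ge (h2.2.2.2 η₁ h1.1 (lt_of_le_of_ne hle (Ne.symm hne12)))

lemma oplus (ctx : Ctx one C) {η₁ η₂ η₃ p τ₁₂ τ₂₃ : Setoid A}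
    (h1 : IsCMI C η₁ p) (h2 : IsCMI C η₂ p) (h3 : IsCMI C η₃ p)
    (hne12 : η₁ ≠ η₂) (hne23 : η₂ ≠ η₃) (hne13 : η₁ ≠ η₃)
    (m12 : MidI C p η₁ η₂ τ₁₂) (m23 : MidI C p η₂ η₃ τ₂₃) : ∃ γ, MidI C p η₁ η₃ γ := by
  classical
  have t12cmi := mid_cmi ctx h1 h2 hne12 m12
  have t23cmi := mid_cmi ctx h2 h3 hne23 m23
  set ρ := (η₁ ⊓ η₃) ⊔ (τ₁₂ ⊓ τ₂₃) with hρdef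
  by_cases hA : ρ ≠ η₁ ⊓ η₃ ∧ ρ ≠ η₁ ∧ ρ ≠ η₃
  · -- Case A : ρ is a third element
    have hsymmB : ∀ {x y}, Bul p η₁ η₃ x y → Bul p η₁ η₃ y x := by
      rintro x y ⟨hp, hf⟩
      refine ⟨p.iseqv.symm hp, ?_⟩
      constructor
      · intro h'; exact η₃.iseqv.symm (hf.mp (η₁.iseqv.symm h'))
      · intro h'; exact η₁.iseqv.symm (hf.mpr (η₃.iseqv.symm h'))
    have htransB : ∀ {x y z}, Bul p η₁ η₃ x y → Bul p η₁ η₃ y z → Bul p η₁ η₃ x z := by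
      rintro x y z ⟨hp1, hf1⟩ ⟨hp2, hf2⟩
      have hp3 : p.r x z := p.iseqv.trans hp1 hp2
      refine ⟨hp3, ?_⟩
      rw [fact6 ctx h1 hp1, fact6 ctx h3 hp1] at hf1
      rw [fact6 ctx h1 hp2, fact6 ctx h3 hp2] at hf2
      rw [fact6 ctx h1 hp3, fact6 ctx h3 hp3]
      tauto
    obtain ⟨κ, hκrel⟩ : ∃ κ : Setoid A, ∀ x y, κ.r x y ↔ Bul p η₁ η₃ x y :=
      ⟨⟨Bul p η₁ η₃, ⟨fun a => ⟨p.iseqv.refl a, iff_of_true (η₁.iseqv.refl a) (η₃.iseqv.refl a)⟩, hsymmB, htransB⟩⟩,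
        fun _ _ => Iff.rfl⟩
    have hκle : ρ ≤ κ := by
      refine sup_le (le_of_all fun x y h => ?_) (le_of_all fun x y h => ?_)
      · exact (hκrel x y).mpr ⟨rle h1.2.2.1.le h.1, iff_of_true h.1 h.2⟩
      · rw [hκrel x y]
        have ht12 : τ₁₂.r x y := h.1
        have ht23 : τ₂₃.r x y := h.2
        have hp : p.r x y := rle m12.2.2.1 ht12
        refine ⟨hp, ?_⟩
        rw [fact6 ctx h1 hp, fact6 ctx h3 hp]
        by_cases hx : p.r one x
        · have hy : p.r one y := p.iseqv.trans hx hp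
          have a12 := (fact6 ctx t12cmi hp).mp ht12
          have a23 := (fact6 ctx t23cmi hp).mp ht23
          rw [mid_Echar ctx h1 h2 hne12 m12 x, mid_Echar ctx h1 h2 hne12 m12 y] at a12
          rw [mid_Echar ctx h2 h3 hne23 m23 x, mid_Echar ctx h2 h3 hne23 m23 y] at a23
          simp only [hx, hy, true_and] at a12 a23
          tauto
        · have hy : ¬ p.r one y := fun h' => hx (p.iseqv.trans h' (p.iseqv.symm hp))
          have e1x : ¬ η₁.r one x := fun h' => hx (rle h1.2.2.1.le h')
          have e1y : ¬ η₁.r one y := fun h' => hy (rle h1.2.2.1.le h')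
          have e3x : ¬ η₃.r one x := fun h' => hx (rle h3.2.2.1.le h')
          have e3y : ¬ η₃.r one y := fun h' => hy (rle h3.2.2.1.le h')
          tauto
    obtain ⟨u0, hu0⟩ : ∃ u, ¬ (η₁.r one u ↔ η₃.r one u) := by
      by_contra hc
      push_neg at hc
      exact hne13 (ctx.hR η₁ h1.1 η₃ h3.1 hc)
    have hpu0 : p.r one u0 := by
      by_cases h' : η₁.r one u0
      · exact rle h1.2.2.1.le h'
      · have h'' : η₃.r one u0 := by tauto
        exact rle h3.2.2.1.le h''
    have hρp : ρ ≠ p := by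
      intro h
      have hr : ρ.r one u0 := by rw [h]; exact hpu0
      exact hu0 (((hκrel one u0).mp (rle hκle hr)).2)
    have hρle : ρ ≤ p := le_of_all fun x y h => ((hκrel x y).mp (rle hκle h)).1
    exact ⟨ρ, sup_mem ctx (inf_mem ctx h1.1 h3.1) (inf_mem ctx t12cmi.1 t23cmi.1),
      le_sup_left, hρle, hA.1, hA.2.1, hA.2.2, hρp⟩
  · -- Case B
    push_neg at hA
    have hIle : τ₁₂ ⊓ τ₂₃ ≤ η₁ ∨ τ₁₂ ⊓ τ₂₃ ≤ η₃ := by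
      by_cases e1 : ρ = η₁ ⊓ η₃
      · exact Or.inl ((le_sup_right.trans e1.le).trans inf_le_left)
      · by_cases e2 : ρ = η₁
        · exact Or.inl (le_sup_right.trans e2.le)
        · exact Or.inr (le_sup_right.trans (hA e1 e2).le)
    rcases hIle with hI | hI
    · exact caseB ctx h1 h2 h3 hne12 hne23 hne13 m12 m23 hI
    · obtain ⟨γ, hγ⟩ := caseB ctx h3 h2 h1 (Ne.symm hne23) (Ne.symm hne12)
        (Ne.symm hne13) (midi_comm m23) (midi_comm m12) (by rwa [inf_comm])
      exact ⟨γ, midi_comm hγ⟩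

end SF

namespace SF

variable {one : A} {C : Set (Setoid A)}

/-- `φ` and `η` are equal or admit a third element over their meet. -/
def EqC (C : Set (Setoid A)) (p φ η : Setoid A) : Prop :=
  φ = η ∨ ∃ γ, MidI C p φ η γ

lemma midi_ne {φ η γ p : Setoid A} (hφ : IsCMI C φ p) (hmid : MidI C p φ η γ) : φ ≠ η := by
  rintro rfl
  have hle : φ ≤ γ := by
    have := hmid.2.1
    rwa [inf_idem] at this
  rcases (good_cmi hφ).2.2.2 γ hmid.1 hle hmid.2.2.1 with h | h
  · exact hmid.2.2.2.2.1 h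
  · exact hmid.2.2.2.2.2.2 h

lemma eqc_trans (ctx : Ctx one C) {φ η η' p : Setoid A} (hφ : IsCMI C φ p)
    (hη : IsCMI C η p) (hη' : IsCMI C η' p) (h1 : EqC C p φ η) (h2 : EqC C p η η') :
    EqC C p φ η' := by
  rcases h1 with rfl | ⟨γ1, hγ1⟩
  · exact h2
  rcases h2 with rfl | ⟨γ2, hγ2⟩
  · exact Or.inr ⟨γ1, hγ1⟩
  by_cases hfe : φ = η'
  · exact Or.inl hfe
  exact Or.inr (oplus ctx hφ hη hη' (midi_ne hφ hγ1) (midi_ne hη hγ2) hfe hγ1 hγ2)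

lemma chain_inv (ctx : Ctx one C) {φ p : Setoid A} (hφ : IsCMI C φ p) :
    ∀ J : Setoid A × Setoid A, Projective C (φ, p) J →
      GoodI C J.1 J.2 ∧ J.2 ≤ p ∧
        ∃ η, IsCMI C η p ∧ J.1 ≤ η ∧ ¬ J.2 ≤ η ∧ EqC C p φ η := by
  intro J hJ
  induction hJ with
  | refl =>
      exact ⟨good_cmi hφ, le_rfl, φ, hφ, le_rfl, fun h => hφ.2.2.1.not_ge h, Or.inl rfl⟩
  | @tail b c hb hstep ih =>
      obtain ⟨hgood, hble, η, hηcmi, hbleη, hbnleη, heqc⟩ := ih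
      have hc1C : c.1 ∈ C := hstep.2.2.1
      have hc2C : c.2 ∈ C := hstep.2.2.2.1
      have hor := hstep.2.2.2.2
      have hgoodc : GoodI C c.1 c.2 := by
        rcases hor with ⟨e1, e2⟩ | ⟨e1, e2⟩
        · exact transpose_up ctx hgood hc1C hc2C e1 e2
        · exact transpose_down ctx hgood hc1C hc2C e1 e2
      obtain ⟨u', hu'2, hu'1⟩ := wit ctx hgoodc.1 hgoodc.2.1 hgoodc.2.2.1.le hgoodc.2.2.1.ne
      obtain ⟨η', hcη', hη'u, hη'cmi⟩ := zorn_cmi ctx hgoodc.1 hu'1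
      have hc2eq : c.2 = c.1 ⊔ theta C one u' := by
        rcases hgoodc.2.2.2 (c.1 ⊔ theta C one u')
          (sup_mem ctx hgoodc.1 (theta_mem ctx one u')) le_sup_left
          (sup_le hgoodc.2.2.1.le (theta_le hgoodc.2.1 hu'2)) with h | h
        · exact absurd (rle (le_sup_right.trans h.le) (theta_rel one u')) hu'1
        · exact h.symm
      have hq'eq : η' ⊔ theta C one u' = η' ⊔ c.2 := by
        rw [hc2eq, ← sup_assoc, sup_eq_left.mpr hcη']
      have hmeet : c.2 ⊓ η' = c.1 := by
        rcases hgoodc.2.2.2 (c.2 ⊓ η') (inf_mem ctx hgoodc.2.1 hη'cmi.1)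
          (le_inf hgoodc.2.2.1.le hcη') inf_le_left with h | h
        · exact h
        · exact absurd (rle (inf_eq_left.mp h) hu'2) hη'u
      have hpersp : Persp C (c.1, c.2) (η', η' ⊔ theta C one u') := by
        refine ⟨hc1C, hc2C, hη'cmi.1, hη'cmi.2.1, Or.inl ⟨hmeet.symm, ?_⟩⟩
        rw [hq'eq, sup_comm]
      have hproj : Projective C (φ, p) (η', η' ⊔ theta C one u') :=
        Relation.ReflTransGen.tail (Relation.ReflTransGen.tail hb hstep) hpersp
      have hqp : η' ⊔ theta C one u' = p :=
        ctx.hP η' φ _ p hη'cmi hφ (proj_symm hproj)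
      have hc2p : c.2 ≤ p := by
        rw [← hqp, hq'eq]
        exact le_sup_right
      have hη'cmi' : IsCMI C η' p := by rwa [hqp] at hη'cmi
      have hη'N2 : ¬ c.2 ≤ η' := fun h => hη'u (rle h hu'2)
      rcases hor with ⟨e1, e2⟩ | ⟨e1, e2⟩
      · have hb1c1 : b.1 ≤ c.1 := by rw [e1]; exact inf_le_right
        have hη'Nb1 : b.1 ≤ η' := hb1c1.trans hcη'
        have hη'Nb2 : ¬ b.2 ≤ η' := by
          intro h
          exact hη'N2 (by rw [e2]; exact sup_le h hcη')
        have heqc' : EqC C p φ η' := by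
          by_cases he : η = η'
          · exact he ▸ heqc
          · have hmid := vlemma ctx hηcmi hη'cmi' he hgood hble hbleη hη'Nb1 hbnleη hη'Nb2
            exact eqc_trans ctx hφ hηcmi hη'cmi' heqc (Or.inr hmid)
        exact ⟨hgoodc, hc2p, η', hη'cmi', hcη', hη'N2, heqc'⟩
      · have hc1b1 : c.1 ≤ b.1 := by rw [e1]; exact inf_le_right
        have hN1 : c.1 ≤ η := hc1b1.trans hbleη
        have hN2 : ¬ c.2 ≤ η := fun h => hbnleη (by rw [e2]; exact sup_le h hbleη)
        exact ⟨hgoodc, hc2p, η, hηcmi, hN1, hN2, heqc⟩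

/-- Main structural theorem: distinct CMIs with common cover whose prime intervals are
projective admit a third element over their meet. -/
lemma third_of_proj (ctx : Ctx one C) {φ ψ p : Setoid A} (hφ : IsCMI C φ p)
    (hψ : IsCMI C ψ p) (hne : φ ≠ ψ) (hproj : Projective C (φ, p) (ψ, p)) :
    ∃ γ, MidI C p φ ψ γ := by
  obtain ⟨_, _, η, hηcmi, hle, _, heqc⟩ := chain_inv ctx hφ (ψ, p) hproj
  have heq : ψ = η := cmi_eq_of_le hψ hηcmi hle
  rcases heqc with he | ⟨γ, hγ⟩
  · exact absurd (he.trans heq.symm) hne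
  · rw [← heq] at hγ
    exact ⟨γ, hγ⟩

end SF

namespace SF

variable {one : A} {C : Set (Setoid A)}

lemma finset_inf_mem (ctx : Ctx one C) (T : Finset (Setoid A)) (hT : ↑T ⊆ C) :
    T.inf id ∈ C := by
  rw [Finset.inf_id_eq_sInf]
  exact ctx.hInf _ hT

end SF

/-- Theorem 18: (1) the map `M : C → 𝒮`, `M(α) = {μ ∈ Cm : α ≤ μ}`, is well defined
and injective; (2) if moreover `A` is finite and condition (D) holds, then `M` is a
bijection between `C` and `𝒮`. -/
theorem stmt14 (one : A) (C : Set (Setoid A))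
    (hInf : ∀ S ⊆ C, sInf S ∈ C) (hSup : ∀ S ⊆ C, sSup S ∈ C)
    (hDir : ∀ D ⊆ C, D.Nonempty → DirectedOn (· ≤ ·) D →
      ∀ x y : A, (sSup D).r x y ↔ ∃ s ∈ D, s.r x y)
    (hM : ∀ x ∈ C, ∀ y ∈ C, ∀ z ∈ C, x ≤ z → x ⊔ y ⊓ z = (x ⊔ y) ⊓ z)
    (hO : ∀ α ∈ C, ∀ a b : A, α ⊔ theta C one a = α ⊔ theta C one b ↔ α.r a b)
    (hR : ∀ α ∈ C, ∀ β ∈ C, (∀ x : A, α.r one x ↔ β.r one x) → α = β)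
    (hP : ∀ φ ψ p q : Setoid A, IsCMI C φ p → IsCMI C ψ q →
      Projective C (φ, p) (ψ, q) → p = q) :
    ((∀ α ∈ C, InCalS C {μ | (∃ q, IsCMI C μ q) ∧ α ≤ μ}) ∧
      (∀ α ∈ C, ∀ β ∈ C,
        {μ | (∃ q, IsCMI C μ q) ∧ α ≤ μ} = {μ | (∃ q, IsCMI C μ q) ∧ β ≤ μ} → α = β)) ∧
    (Finite A →
      (∀ α ∈ C, ∀ β ∈ C, ∀ η p, IsCMI C η p → α ⊓ β ≤ η →
        ∃ μ₁ μ₂ : Setoid A, (μ₁ = ⊤ ∨ PIP C μ₁ η) ∧ (μ₂ = ⊤ ∨ PIP C μ₂ η) ∧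
          α ≤ μ₁ ∧ β ≤ μ₂ ∧ μ₁ ⊓ μ₂ ≤ η) →
      ∀ S, InCalS C S → ∃ α ∈ C, {μ | (∃ q, IsCMI C μ q) ∧ α ≤ μ} = S) := by

  have ctx : SF.Ctx one C := ⟨hInf, hSup, hDir, hM, hO, hR, hP⟩
  constructor
  · constructor
    · -- Part 1a : well-definedness
      intro α hα
      refine ⟨fun μ hμ => hμ.1, fun μ hμ ν p hν hle => ⟨⟨p, hν⟩, hμ.2.trans hle⟩, ?_⟩
      intro η p hη φ ψ hφ hψ
      rcases hφ with ⟨hφS, hφPIP⟩ | hφp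
      · have hφc := SF.pip_cov ctx hη hφPIP
        rcases hψ with ⟨hψS, hψPIP⟩ | hψp
        · have hψc := SF.pip_cov ctx hη hψPIP
          by_cases hne : φ = ψ
          · subst hne
            refine ⟨p, Or.inr rfl, ?_⟩
            funext x y
            exact propext ⟨fun h => ⟨h, Iff.rfl⟩, fun h => h.1⟩
          · have hproj : Projective C (φ, p) (ψ, p) :=
              Relation.ReflTransGen.trans hφc.2 (SF.proj_symm hψc.2)
            obtain ⟨γ, hmid⟩ := SF.third_of_proj ctx hφc.1 hψc.1 hne hproj
            have hγcmi := SF.mid_cmi ctx hφc.1 hψc.1 hne hmid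
            refine ⟨γ, Or.inl ⟨⟨⟨p, hγcmi⟩, (le_inf hφS.2 hψS.2).trans hmid.2.1⟩,
              ⟨p, p, hγcmi, hη, Relation.ReflTransGen.trans
                (SF.mid_proj ctx hφc.1 hψc.1 hne hmid) hφc.2⟩⟩, ?_⟩
            exact SF.mid_rel_eq ctx hφc.1 hψc.1 hne hmid
        · -- ψ = p
          rw [hψp]
          refine ⟨φ, Or.inl ⟨hφS, hφPIP⟩, ?_⟩
          funext x y
          refine propext ⟨fun h => ?_, fun h => h.2.mpr h.1⟩
          have hp : p.r x y := SF.rle hφc.1.2.2.1.le h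
          exact ⟨hp, iff_of_true h hp⟩
      · rw [hφp]
        rcases hψ with ⟨hψS, hψPIP⟩ | hψp
        · have hψc := SF.pip_cov ctx hη hψPIP
          refine ⟨ψ, Or.inl ⟨hψS, hψPIP⟩, ?_⟩
          funext x y
          refine propext ⟨fun h => ?_, fun h => h.2.mp h.1⟩
          have hp : p.r x y := SF.rle hψc.1.2.2.1.le h
          exact ⟨hp, iff_of_true hp h⟩
        · rw [hψp]
          refine ⟨p, Or.inr rfl, ?_⟩
          funext x y
          exact propext ⟨fun h => ⟨h, Iff.rfl⟩, fun h => h.1⟩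
    · -- Part 1b : injectivity
      intro α hα β hβ hset
      have key : ∀ γ ∈ C, ∀ δ ∈ C,
          {μ | (∃ q, IsCMI C μ q) ∧ γ ≤ μ} = {μ | (∃ q, IsCMI C μ q) ∧ δ ≤ μ} →
          ∀ x y, δ.r x y → γ.r x y := by
        intro γ hγ δ hδ hs x y hxy
        by_contra hn
        obtain ⟨m, hγm, hmxy, hcmi⟩ := SF.zorn_cmi ctx hγ hn
        have hmem : m ∈ {μ | (∃ q, IsCMI C μ q) ∧ γ ≤ μ} := ⟨⟨_, hcmi⟩, hγm⟩
        rw [hs] at hmem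
        exact hmxy (SF.rle hmem.2 hxy)
      exact le_antisymm (SF.le_of_all fun x y h => key β hβ α hα hset.symm x y h)
        (SF.le_of_all fun x y h => key α hα β hβ hset x y h)
  · -- Part 2 : surjectivity
    intro hfin hD S hS
    classical
    haveI : Finite (Setoid A) := by
      refine Finite.of_injective (fun s : Setoid A => s.r) ?_
      intro s t h
      cases s; cases t
      cases h
      rfl
    obtain ⟨hS1, hS2, hS3⟩ := hS
    have hSC : S ⊆ C := fun μ hμ => (hS1 μ hμ).choose_spec.1
    have key : ∀ T : Finset (Setoid A), ↑T ⊆ S →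
        ∀ η p, IsCMI C η p → T.inf id ≤ η → η ∈ S := by
      intro T
      induction T using Finset.strongInduction with
      | _ T ihT =>
        intro hTS η p hη hle
        rcases T.eq_empty_or_nonempty with rfl | ⟨μ₀, hμ₀⟩
        · rw [Finset.inf_empty] at hle
          have htop : η = ⊤ := top_le_iff.mp hle
          rw [htop] at hη
          exact absurd hη.2.2.1 not_top_lt
        · have hssub : T.erase μ₀ ⊂ T := Finset.erase_ssubset hμ₀
          have hT'S : ↑(T.erase μ₀) ⊆ S := fun x hx =>
            hTS (Finset.mem_coe.mpr (Finset.mem_of_mem_erase hx))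
          have hinf : T.inf id = μ₀ ⊓ (T.erase μ₀).inf id := by
            conv_lhs => rw [← Finset.insert_erase hμ₀]
            rw [Finset.inf_insert]
            rfl
          have hinfC : (T.erase μ₀).inf id ∈ C :=
            SF.finset_inf_mem ctx _ (fun x hx => hSC (hT'S hx))
          have hμ₀S : μ₀ ∈ S := hTS hμ₀
          obtain ⟨μ₁, μ₂, ha1, ha2, hle1, hle2, hmeetle⟩ :=
            hD ((T.erase μ₀).inf id) hinfC μ₀ (hSC hμ₀S) η p hη
              (by rw [inf_comm, ← hinf]; exact hle)
          rcases ha1 with rfl | hpip1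
          · rcases ha2 with rfl | hpip2
            · rw [inf_idem] at hmeetle
              have htop : η = ⊤ := top_le_iff.mp hmeetle
              rw [htop] at hη
              exact absurd hη.2.2.1 not_top_lt
            · obtain ⟨hμ₂cmi, _⟩ := SF.pip_cov ctx hη hpip2
              rw [top_inf_eq] at hmeetle
              have heq : μ₂ = η := SF.cmi_eq_of_le hμ₂cmi hη hmeetle
              exact hS2 μ₀ hμ₀S η p hη (heq ▸ hle2)
          · obtain ⟨hμ₁cmi, hμ₁proj⟩ := SF.pip_cov ctx hη hpip1
            rcases ha2 with rfl | hpip2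
            · rw [inf_top_eq] at hmeetle
              exact ihT _ hssub hT'S η p hη (hle1.trans hmeetle)
            · obtain ⟨hμ₂cmi, hμ₂proj⟩ := SF.pip_cov ctx hη hpip2
              by_cases h12 : μ₁ = μ₂
              · subst h12
                rw [inf_idem] at hmeetle
                exact ihT _ hssub hT'S η p hη (hle1.trans hmeetle)
              · have hμ₁S : μ₁ ∈ S := ihT _ hssub hT'S μ₁ p hμ₁cmi hle1
                have hμ₂S : μ₂ ∈ S := hS2 μ₀ hμ₀S μ₂ p hμ₂cmi hle2
                obtain ⟨σ, hσalt, hσrel⟩ := hS3 η p hη μ₁ μ₂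
                  (Or.inl ⟨hμ₁S, hpip1⟩) (Or.inl ⟨hμ₂S, hpip2⟩)
                have hσiff : ∀ x y, σ.r x y ↔ Bul p μ₁ μ₂ x y := fun x y =>
                  iff_of_eq (congrFun (congrFun hσrel x) y)
                rcases hσalt with ⟨hσS, hσPIP⟩ | hσp
                · have hσcmi := (SF.pip_cov ctx hη hσPIP).1
                  have hmidσ : SF.MidI C p μ₁ μ₂ σ :=
                    SF.midi_of_bul ctx hμ₁cmi hμ₂cmi h12 hσcmi.1 hσiff
                  by_cases he1 : η = μ₁
                  · exact he1 ▸ hμ₁S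
                  by_cases he2 : η = μ₂
                  · exact he2 ▸ hμ₂S
                  have hnem : η ≠ μ₁ ⊓ μ₂ := by
                    intro h
                    have hlt : η < μ₁ := lt_of_le_of_ne (h.le.trans inf_le_left) he1
                    exact hμ₁cmi.2.2.1.not_ge (hη.2.2.2 μ₁ hμ₁cmi.1 hlt)
                  have hmidη : SF.MidI C p μ₁ μ₂ η :=
                    ⟨hη.1, hmeetle, hη.2.2.1.le, hnem, he1, he2, hη.2.2.1.ne⟩
                  have heq := SF.mid_unique ctx hμ₁cmi hμ₂cmi h12 hmidη hmidσ
                  exact heq ▸ hσS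
                · exfalso
                  rw [hσp] at hσiff
                  have hle12 : μ₁ ≤ μ₂ := SF.le_of_all fun x y h => by
                    have hp : p.r x y := SF.rle hμ₁cmi.2.2.1.le h
                    exact ((hσiff x y).mp hp).2.mp h
                  exact h12 (SF.cmi_eq_of_le hμ₁cmi hμ₂cmi hle12)
    refine ⟨sInf S, hInf S hSC, ?_⟩
    ext μ
    simp only [Set.mem_setOf_eq]
    constructor
    · rintro ⟨⟨q, hq⟩, hle⟩
      have hfinS : S.Finite := Set.toFinite S
      refine key hfinS.toFinset (by simp) μ q hq ?_
      rw [Finset.inf_id_eq_sInf, Set.Finite.coe_toFinset]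
      exact hle
    · intro hμ
      exact ⟨hS1 μ hμ, sInf_le hμ⟩
end
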